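/- arXiv:2504.16230 — 3 statements merged into one kernel-verified Lean document; each statement's English description precedes it below -/
import Mathlib

section
/- (Lemma S2, α-remainder for the non-efficient influence function.) Under the setup and Assumptions A4 and A5, let ω₁ : ℝ^p → ℝ be measurable with ω₁(L*) a version of E[E | σ(L*)] under μ(·|{A = 1, R = 1}). Let η̄₁, ω̄₁ : ℝ^p → ℝ be any bounded measurable functions with η̄₁ ≥ ε' > 0 everywhere. Then E[A·(1 − R/η̄₁(L*))·ω̄₁(L*)] + E[A·R·E/η̄₁(L*)] − E[A·ω₁(L*)] = E[A·(ω̄₁(L*) − ω₁(L*))·(1 − η₁(L*)/η̄₁(L*))]. -/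
open MeasureTheory ProbabilityTheory
open scoped ENNReal ProbabilityTheory

set_option linter.unusedVariables false

private lemma bddInt {Ω : Type*} [MeasurableSpace Ω] {ν : Measure Ω} [IsFiniteMeasure ν]
    {f : Ω → ℝ} (hf : Measurable f) {C : ℝ} (hC : ∀ ω, |f ω| ≤ C) : Integrable f ν :=
  (integrable_const C).mono' hf.aestronglyMeasurable
    (Filter.Eventually.of_forall fun ω => by simpa [Real.norm_eq_abs] using hC ω)

private lemma pull_condexp {Ω : Type*} {m m0 : MeasurableSpace Ω} {ν : Measure Ω}
    [IsFiniteMeasure ν] (hm : m ≤ m0) {φ f : Ω → ℝ}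
    (hφ : StronglyMeasurable[m] φ) {C : ℝ} (hφbd : ∀ ω, |φ ω| ≤ C)
    (hf : Integrable f ν) :
    ∫ ω, φ ω * f ω ∂ν = ∫ ω, φ ω * (ν[f|m]) ω ∂ν := by
  have hb : ∀ᵐ ω ∂ν, ‖φ ω‖ ≤ C := Filter.Eventually.of_forall fun ω => by
    simpa [Real.norm_eq_abs] using hφbd ω
  have hmul := condExp_stronglyMeasurable_mul_of_bound hm hφ hf C hb
  calc ∫ ω, φ ω * f ω ∂ν = ∫ ω, (φ * f) ω ∂ν := rfl
    _ = ∫ ω, (ν[φ * f|m]) ω ∂ν := (integral_condExp hm).symm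
    _ = ∫ ω, (φ * ν[f|m]) ω ∂ν := integral_congr_ae hmul
    _ = ∫ ω, φ ω * (ν[f|m]) ω ∂ν := rfl

/-- **Lemma S2 (α-remainder for the non-efficient influence function).** -/
theorem stmt_10
    {Ω : Type*} [𝓕 : MeasurableSpace Ω] [StandardBorelSpace Ω] [Nonempty Ω]
    (μ : Measure Ω) [IsProbabilityMeasure μ]
    {p q : ℕ}
    (Lstar : Ω → Fin p → ℝ) (L : Ω → Fin q → ℝ) (A R Y : Ω → ℝ)
    (hLstar : Measurable Lstar) (hL : Measurable L)
    (hA : Measurable A) (hR : Measurable R) (hY : Measurable Y)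
    (hA01 : ∀ ω, A ω = 0 ∨ A ω = 1) (hR01 : ∀ ω, R ω = 0 ∨ R ω = 1)
    (hY2 : MemLp Y 2 μ)
    (g : (Fin q → ℝ) → ℝ → ℝ) (hg : Measurable (Function.uncurry g))
    (hg01 : ∀ x a, g x a = 0 ∨ g x a = 1)
    -- Assumption A4 (MAR): R ⫫ (L, Y) | σ(L*, A)
    (hMAR : CondIndepFun (MeasurableSpace.comap (fun ω => (Lstar ω, A ω)) inferInstance)
      ((hLstar.prodMk hA).comap_le) R (fun ω => (L ω, Y ω)) μ)
    -- Assumption A5 (missingness positivity)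
    (η : (Fin p → ℝ) → ℝ → ℝ) (hη : Measurable (Function.uncurry η))
    (hηver : (fun ω => η (Lstar ω) (A ω)) =ᵐ[μ]
      μ[R|MeasurableSpace.comap (fun ω => (Lstar ω, A ω)) inferInstance])
    (ε₀ : ℝ) (hε₀ : 0 < ε₀)
    (hηpos : ∀ᵐ ω ∂μ, ε₀ ≤ η (Lstar ω) 0 ∧ ε₀ ≤ η (Lstar ω) 1)
    (hA1R : 0 < μ {ω | A ω = 1 ∧ R ω = 1})
    -- true nuisance ω₁
    (ω₁ : (Fin p → ℝ) → ℝ) (hω₁ : Measurable ω₁)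
    (hω₁ver : (fun ω => ω₁ (Lstar ω)) =ᵐ[μ[|{ω | A ω = 1 ∧ R ω = 1}]]
      (μ[|{ω | A ω = 1 ∧ R ω = 1}])[(fun ω => g (L ω) (A ω))|MeasurableSpace.comap
          Lstar inferInstance])
    -- estimated (barred) nuisances: bounded measurable, η̄₁ bounded below
    (ηbar₁ : (Fin p → ℝ) → ℝ) (hηbar₁ : Measurable ηbar₁)
    (Cη : ℝ) (hηbar₁bd : ∀ x, |ηbar₁ x| ≤ Cη)
    (ε' : ℝ) (hε' : 0 < ε') (hηbar₁lb : ∀ x, ε' ≤ ηbar₁ x)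
    (ωbar₁ : (Fin p → ℝ) → ℝ) (hωbar₁ : Measurable ωbar₁)
    (Cω : ℝ) (hωbar₁bd : ∀ x, |ωbar₁ x| ≤ Cω) :
    ∫ ω, A ω * (1 - R ω / ηbar₁ (Lstar ω)) * ωbar₁ (Lstar ω) ∂μ
      + ∫ ω, A ω * R ω * g (L ω) (A ω) / ηbar₁ (Lstar ω) ∂μ
      - ∫ ω, A ω * ω₁ (Lstar ω) ∂μ
    = ∫ ω, A ω * (ωbar₁ (Lstar ω) - ω₁ (Lstar ω))
          * (1 - η (Lstar ω) 1 / ηbar₁ (Lstar ω)) ∂μ := by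
  classical
  set G : MeasurableSpace Ω := MeasurableSpace.comap (fun ω => (Lstar ω, A ω)) inferInstance
    with hGdef
  have hG_le : G ≤ 𝓕 := (hLstar.prodMk hA).comap_le
  set m : MeasurableSpace Ω := MeasurableSpace.comap Lstar inferInstance with hmdef
  have hm_le : m ≤ 𝓕 := hLstar.comap_le
  letI : MeasurableSpace Ω := 𝓕
  have hPairG : Measurable[G] (fun ω => (Lstar ω, A ω)) := Measurable.of_comap_le hGdef.ge
  have hLm : Measurable[m] Lstar := Measurable.of_comap_le hmdef.ge
  -- basic bounds
  have habs01 : ∀ x : ℝ, x = 0 ∨ x = 1 → |x| ≤ 1 := fun x h =>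
    h.elim (fun h => by simp [h]) (fun h => by simp [h])
  have hAabs : ∀ ω, |A ω| ≤ 1 := fun ω => habs01 _ (hA01 ω)
  have hRabs : ∀ ω, |R ω| ≤ 1 := fun ω => habs01 _ (hR01 ω)
  have hgLA : Measurable (fun ω => g (L ω) (A ω)) := hg.comp (hL.prodMk hA)
  have hgabs : ∀ ω, |g (L ω) (A ω)| ≤ 1 := fun ω => habs01 _ (hg01 _ _)
  have hRint : Integrable R μ := bddInt hR hRabs
  have hCω0 : 0 ≤ Cω := le_trans (abs_nonneg _) (hωbar₁bd (fun _ => 0))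
  have hηbar₁pos : ∀ x, 0 < ηbar₁ x := fun x => lt_of_lt_of_le hε' (hηbar₁lb x)
  have hηbar₁ne : ∀ x, ηbar₁ x ≠ 0 := fun x => (hηbar₁pos x).ne'
  -- truncations
  set ω₁' : (Fin p → ℝ) → ℝ := fun x => max (-1) (min 1 (ω₁ x)) with hω₁'def
  have hω₁'meas : Measurable ω₁' := measurable_const.max (measurable_const.min hω₁)
  have hω₁'bd : ∀ x, |ω₁' x| ≤ 1 := fun x => abs_le.mpr
    ⟨le_max_left _ _, max_le (by norm_num) (min_le_left _ _)⟩
  have hη1meas : Measurable (fun x => η x 1) := hη.comp (measurable_id.prodMk measurable_const)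
  set η₁' : (Fin p → ℝ) → ℝ := fun x => max 0 (min 1 (η x 1)) with hη₁'def
  have hη₁'meas : Measurable η₁' := measurable_const.max (measurable_const.min hη1meas)
  have hη₁'bd : ∀ x, |η₁' x| ≤ 1 := fun x => abs_le.mpr
    ⟨le_trans (by norm_num) (le_max_left (0 : ℝ) _), max_le (by norm_num) (min_le_left _ _)⟩
  -- the complete-case set
  have hSmeas : MeasurableSet {ω | A ω = 1 ∧ R ω = 1} :=
    (hA (measurableSet_singleton 1)).inter (hR (measurableSet_singleton 1))
  set S : Set Ω := {ω | A ω = 1 ∧ R ω = 1} with hSdef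
  have hμS : μ S ≠ 0 := hA1R.ne'
  have hμStop : μ S ≠ ∞ := measure_ne_top μ S
  have hSreal : (μ S).toReal ≠ 0 := ENNReal.toReal_ne_zero.mpr ⟨hμS, hμStop⟩
  haveI hνProb : IsProbabilityMeasure μ[|S] := cond_isProbabilityMeasure hμS
  have hcondeq : μ[|S] = (μ S)⁻¹ • μ.restrict S := rfl
  have haecond : ∀ P : Ω → Prop, (∀ᵐ ω ∂μ[|S], P ω) ↔ (∀ᵐ ω ∂μ.restrict S, P ω) := fun P => by
    rw [hcondeq]
    exact Measure.ae_ennreal_smul_measure_iff (ENNReal.inv_ne_zero.mpr hμStop)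
  -- conditional expectation of R is in [0,1]
  have hcond_nn : 0 ≤ᵐ[μ] μ[R|G] := condExp_nonneg (Filter.Eventually.of_forall fun ω =>
    (hR01 ω).elim (fun h => by simp [h]) (fun h => by simp [h]))
  have hcond_le : μ[R|G] ≤ᵐ[μ] fun _ => (1 : ℝ) := by
    have h1 : μ[R|G] ≤ᵐ[μ] μ[fun _ => (1 : ℝ)|G] :=
      condExp_mono hRint (integrable_const (1 : ℝ)) (Filter.Eventually.of_forall fun ω =>
        (hR01 ω).elim (fun h => by simp [h]) (fun h => by simp [h]))
    exact (condExp_const (μ := μ) hG_le (1 : ℝ)) ▸ h1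
  have hη01 : ∀ᵐ ω ∂μ, 0 ≤ η (Lstar ω) (A ω) ∧ η (Lstar ω) (A ω) ≤ 1 := by
    filter_upwards [hηver, hcond_le, hcond_nn] with ω h1 h2 h3
    exact ⟨h1 ▸ h3, h1 ▸ h2⟩
  have hηrepl : ∀ᵐ ω ∂μ, A ω = 1 → η (Lstar ω) 1 = η₁' (Lstar ω) := by
    filter_upwards [hη01] with ω h hA1
    rw [hA1] at h
    simp only [hη₁'def]
    rw [min_eq_right h.2, max_eq_right h.1]
  -- ω₁ is bounded by 1 a.e. under the conditional measure
  have hgint_ν : Integrable (fun ω => g (L ω) (A ω)) μ[|S] := bddInt hgLA hgabs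
  have hν_nn : 0 ≤ᵐ[μ[|S]] (μ[|S])[(fun ω => g (L ω) (A ω))|m] :=
    condExp_nonneg (Filter.Eventually.of_forall fun ω =>
      (hg01 (L ω) (A ω)).elim (fun h => by simp [h]) (fun h => by simp [h]))
  have hν_le : (μ[|S])[(fun ω => g (L ω) (A ω))|m] ≤ᵐ[μ[|S]] fun _ => (1 : ℝ) := by
    have h1 : (μ[|S])[(fun ω => g (L ω) (A ω))|m] ≤ᵐ[μ[|S]] (μ[|S])[fun _ => (1 : ℝ)|m] :=
      condExp_mono hgint_ν (integrable_const (1 : ℝ)) (Filter.Eventually.of_forall fun ω =>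
        (hg01 (L ω) (A ω)).elim (fun h => by simp [h]) (fun h => by simp [h]))
    exact (condExp_const (μ := μ[|S]) hm_le (1 : ℝ)) ▸ h1
  have hν01 : ∀ᵐ ω ∂μ[|S], |ω₁ (Lstar ω)| ≤ 1 := by
    filter_upwards [hω₁ver, hν_nn, hν_le] with ω h1 h2 h3
    rw [h1]
    have h2' : (0 : ℝ) ≤ (μ[|S][fun ω => g (L ω) (A ω)|m]) ω := by simpa using h2
    exact abs_le.mpr ⟨by linarith, h3⟩
  -- ω₁ is bounded by 1 a.e. on {A = 1}
  have hNmeas : MeasurableSet {ω | 1 < |ω₁ (Lstar ω)|} :=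
    measurableSet_lt measurable_const (hω₁.comp hLstar).abs
  have hμNS : μ ({ω | 1 < |ω₁ (Lstar ω)|} ∩ S) = 0 := by
    have h0 : μ.restrict S {ω | 1 < |ω₁ (Lstar ω)|} = 0 := by
      have he : {ω | 1 < |ω₁ (Lstar ω)|} = {ω | ¬ |ω₁ (Lstar ω)| ≤ 1} := by
        ext ω; simp [not_le]
      rw [he]
      exact ae_iff.mp ((haecond _).mp hν01)
    rwa [Measure.restrict_apply hNmeas] at h0
  set T : Set Ω := {ω | 1 < |ω₁ (Lstar ω)|} ∩ {ω | A ω = 1} with hTdef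
  have hT_G : MeasurableSet[G] T := by
    refine ⟨{x | 1 < |ω₁ x|} ×ˢ {(1 : ℝ)},
      (measurableSet_lt measurable_const hω₁.abs).prod (measurableSet_singleton 1), ?_⟩
    ext ω
    simp only [Set.mem_preimage, Set.mem_prod, Set.mem_setOf_eq, Set.mem_singleton_iff, hTdef,
      Set.mem_inter_iff]
  have hTmeas : MeasurableSet T := hG_le _ hT_G
  have hηAint : Integrable (fun ω => η (Lstar ω) (A ω)) μ := integrable_condExp.congr hηver.symm
  have hint_condR : ∫ ω in T, R ω ∂μ = ∫ ω in T, η (Lstar ω) (A ω) ∂μ := by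
    rw [← setIntegral_condExp hG_le hRint hT_G]
    exact integral_congr_ae (ae_restrict_of_ae hηver.symm)
  have hηAlb : ∀ᵐ ω ∂μ, ε₀ ≤ η (Lstar ω) (A ω) := by
    filter_upwards [hηpos] with ω h
    rcases hA01 ω with h0 | h1
    · rw [h0]; exact h.1
    · rw [h1]; exact h.2
  have hlow : ε₀ * (μ T).toReal ≤ ∫ ω in T, η (Lstar ω) (A ω) ∂μ := by
    have h1 : ∫ ω in T, (fun _ => ε₀) ω ∂μ ≤ ∫ ω in T, η (Lstar ω) (A ω) ∂μ :=
      integral_mono_ae (integrable_const ε₀) hηAint.restrict (ae_restrict_of_ae hηAlb)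
    simpa [setIntegral_const, smul_eq_mul, mul_comm, Measure.real] using h1
  have hupp : ∫ ω in T, R ω ∂μ ≤ 0 := by
    rw [← integral_indicator hTmeas]
    have hNS : MeasurableSet ({ω | 1 < |ω₁ (Lstar ω)|} ∩ S) := hNmeas.inter hSmeas
    have hmono : ∀ ω, T.indicator R ω ≤
        ({ω | 1 < |ω₁ (Lstar ω)|} ∩ S).indicator (fun _ => (1 : ℝ)) ω := by
      intro ω
      by_cases hω : ω ∈ T
      · rw [Set.indicator_of_mem hω]
        rcases hR01 ω with h0 | h1
        · rw [h0]; exact Set.indicator_nonneg (fun _ _ => zero_le_one) ω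
        · rw [h1, Set.indicator_of_mem (show ω ∈ {ω | 1 < |ω₁ (Lstar ω)|} ∩ S from ⟨hω.1, hω.2, h1⟩)]
      · rw [Set.indicator_of_notMem hω]
        exact Set.indicator_nonneg (fun _ _ => zero_le_one) ω
    calc ∫ ω, T.indicator R ω ∂μ
        ≤ ∫ ω, ({ω | 1 < |ω₁ (Lstar ω)|} ∩ S).indicator (fun _ => (1 : ℝ)) ω ∂μ :=
          integral_mono (hRint.indicator hTmeas) ((integrable_const 1).indicator hNS) hmono
      _ = (μ ({ω | 1 < |ω₁ (Lstar ω)|} ∩ S)).toReal := by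
          rw [integral_indicator hNS, setIntegral_const, smul_eq_mul, mul_one]; rfl
      _ = 0 := by rw [hμNS, ENNReal.toReal_zero]
  have hμT : μ T = 0 := by
    by_contra hne
    have hpos : 0 < (μ T).toReal := ENNReal.toReal_pos hne (measure_ne_top μ T)
    have h2 : ε₀ * (μ T).toReal ≤ 0 := hlow.trans (hint_condR.symm.trans_le hupp)
    nlinarith
  have hω₁repl : ∀ᵐ ω ∂μ, A ω = 1 → ω₁ (Lstar ω) = ω₁' (Lstar ω) := by
    have hnm : ∀ᵐ ω ∂μ, ω ∉ T := (ae_iff.mpr (by simpa using hμT))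
    filter_upwards [hnm] with ω hω hA1
    have habs : |ω₁ (Lstar ω)| ≤ 1 := not_lt.mp fun hgt => hω ⟨hgt, hA1⟩
    have h1 := abs_le.mp habs
    simp only [hω₁'def]
    rw [min_eq_right h1.2, max_eq_right h1.1]
  -- bridge between ∫ A R h dμ and the conditional measure
  have hARind : ∀ h : Ω → ℝ, (fun ω => A ω * R ω * h ω) = S.indicator h := by
    intro h
    funext ω
    by_cases hω : ω ∈ S
    · obtain ⟨h1, h2⟩ := hω
      rw [Set.indicator_of_mem (show ω ∈ S from ⟨h1, h2⟩), h1, h2, one_mul, one_mul]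
    · rw [Set.indicator_of_notMem hω]
      rcases hA01 ω with h0 | h1
      · rw [h0]; ring
      · rcases hR01 ω with r0 | r1
        · rw [r0]; ring
        · exact absurd (show ω ∈ S from ⟨h1, r1⟩) hω
  have hbridge : ∀ h : Ω → ℝ, ∫ ω, A ω * R ω * h ω ∂μ = (μ S).toReal * ∫ ω, h ω ∂μ[|S] := by
    intro h
    rw [hARind h, integral_indicator hSmeas, hcondeq, integral_smul_measure, ENNReal.toReal_inv,
      smul_eq_mul, ← mul_assoc, mul_inv_cancel₀ hSreal, one_mul]
  -- step 2: replace g by ω₁' inside complete-case integrals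
  have hstep2 : ∀ f : (Fin p → ℝ) → ℝ, Measurable f → ∀ C : ℝ, (∀ x, |f x| ≤ C) →
      ∫ ω, A ω * R ω * (f (Lstar ω) * g (L ω) (A ω)) ∂μ
        = ∫ ω, A ω * R ω * (f (Lstar ω) * ω₁' (Lstar ω)) ∂μ := by
    intro f hf C hfbd
    rw [hbridge, hbridge]
    congr 1
    have hφm : StronglyMeasurable[m] (fun ω => f (Lstar ω)) := (hf.comp hLm).stronglyMeasurable
    calc ∫ ω, f (Lstar ω) * g (L ω) (A ω) ∂μ[|S]
        = ∫ ω, f (Lstar ω) * ((μ[|S])[(fun ω => g (L ω) (A ω))|m]) ω ∂μ[|S] :=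
          pull_condexp hm_le hφm (fun ω => hfbd _) hgint_ν
      _ = ∫ ω, f (Lstar ω) * ω₁ (Lstar ω) ∂μ[|S] :=
          integral_congr_ae (by filter_upwards [hω₁ver] with ω h; rw [h])
      _ = ∫ ω, f (Lstar ω) * ω₁' (Lstar ω) ∂μ[|S] := by
          refine integral_congr_ae ?_
          filter_upwards [hν01] with ω h
          have h1 := abs_le.mp h
          simp only [hω₁'def]
          rw [min_eq_right h1.2, max_eq_right h1.1]
  -- step 3: replace R by η(·,1) against σ(L*,A)-measurable weights supported on {A = 1}
  have hstep3 : ∀ u : (Fin p → ℝ) → ℝ, Measurable u → ∀ C : ℝ, (∀ x, |u x| ≤ C) →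
      ∫ ω, A ω * u (Lstar ω) * R ω ∂μ = ∫ ω, A ω * u (Lstar ω) * η (Lstar ω) 1 ∂μ := by
    intro u hu C hubd
    have hC0 : 0 ≤ C := le_trans (abs_nonneg _) (hubd (fun _ => 0))
    have hφm : StronglyMeasurable[G] (fun ω => A ω * u (Lstar ω)) := by
      have hψ : Measurable (fun z : (Fin p → ℝ) × ℝ => z.2 * u z.1) :=
        measurable_snd.mul (hu.comp measurable_fst)
      exact (hψ.comp hPairG).stronglyMeasurable
    have hφbd : ∀ ω, |A ω * u (Lstar ω)| ≤ C := by
      intro ω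
      rcases hA01 ω with h0 | h1
      · rw [h0, zero_mul, abs_zero]; exact hC0
      · rw [h1, one_mul]; exact hubd _
    calc ∫ ω, A ω * u (Lstar ω) * R ω ∂μ
        = ∫ ω, A ω * u (Lstar ω) * (μ[R|G]) ω ∂μ := pull_condexp hG_le hφm hφbd hRint
      _ = ∫ ω, A ω * u (Lstar ω) * η (Lstar ω) (A ω) ∂μ :=
          integral_congr_ae (by filter_upwards [hηver] with ω h; rw [h])
      _ = ∫ ω, A ω * u (Lstar ω) * η (Lstar ω) 1 ∂μ :=
          integral_congr_ae (Filter.Eventually.of_forall fun ω => by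
            show A ω * u (Lstar ω) * η (Lstar ω) (A ω) = A ω * u (Lstar ω) * η (Lstar ω) 1
            rcases hA01 ω with h0 | h1
            · rw [h0]; ring
            · rw [h1])
  -- the bounded weight functions
  set u₂ : (Fin p → ℝ) → ℝ := fun x => ωbar₁ x / ηbar₁ x with hu₂def
  have hu₂meas : Measurable u₂ := hωbar₁.div hηbar₁
  have hu₂bd : ∀ x, |u₂ x| ≤ Cω / ε' := by
    intro x
    rw [hu₂def]
    simp only
    rw [abs_div, abs_of_pos (hηbar₁pos x)]
    exact div_le_div₀ hCω0 (hωbar₁bd x) hε' (hηbar₁lb x)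
  set u₃ : (Fin p → ℝ) → ℝ := fun x => ω₁' x / ηbar₁ x with hu₃def
  have hu₃meas : Measurable u₃ := hω₁'meas.div hηbar₁
  have hu₃bd : ∀ x, |u₃ x| ≤ 1 / ε' := by
    intro x
    rw [hu₃def]
    simp only
    rw [abs_div, abs_of_pos (hηbar₁pos x)]
    exact div_le_div₀ zero_le_one (hω₁'bd x) hε' (hηbar₁lb x)
  -- integrability of all pieces
  have hAmul : ∀ (v : (Fin p → ℝ) → ℝ), (∀ x, |v x| ≤ Cω / ε' + 1 + Cω) →
      True := fun _ _ => trivial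
  have hboundA : ∀ (v : Ω → ℝ) (C : ℝ), (∀ ω, |v ω| ≤ C) → ∀ ω, |A ω * v ω| ≤ C := by
    intro v C hv ω
    rcases hA01 ω with h0 | h1
    · rw [h0, zero_mul, abs_zero]; exact le_trans (abs_nonneg _) (hv ω)
    · rw [h1, one_mul]; exact hv ω
  have hboundR : ∀ (v : Ω → ℝ) (C : ℝ), (∀ ω, |v ω| ≤ C) → ∀ ω, |v ω * R ω| ≤ C := by
    intro v C hv ω
    rcases hR01 ω with h0 | h1
    · rw [h0, mul_zero, abs_zero]; exact le_trans (abs_nonneg _) (hv ω)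
    · rw [h1, mul_one]; exact hv ω
  have hf1int : Integrable (fun ω => A ω * ωbar₁ (Lstar ω)) μ :=
    bddInt (hA.mul (hωbar₁.comp hLstar)) (hboundA _ Cω fun ω => hωbar₁bd _)
  have hf2int : Integrable (fun ω => A ω * u₂ (Lstar ω) * R ω) μ :=
    bddInt ((hA.mul (hu₂meas.comp hLstar)).mul hR)
      (hboundR _ _ (hboundA _ (Cω / ε') fun ω => hu₂bd _))
  have hf2'int : Integrable (fun ω => A ω * u₂ (Lstar ω) * η₁' (Lstar ω)) μ :=
    bddInt ((hA.mul (hu₂meas.comp hLstar)).mul (hη₁'meas.comp hLstar))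
      (fun ω => hboundR (fun ω => A ω * u₂ (Lstar ω)) (Cω / ε')
        (hboundA _ (Cω / ε') fun ω => hu₂bd _) ω |> fun _ => by
          calc |A ω * u₂ (Lstar ω) * η₁' (Lstar ω)|
              = |A ω * u₂ (Lstar ω)| * |η₁' (Lstar ω)| := abs_mul _ _
            _ ≤ (Cω / ε') * 1 := mul_le_mul (hboundA _ (Cω / ε') (fun ω => hu₂bd _) ω)
                (hη₁'bd _) (abs_nonneg _) (div_nonneg hCω0 hε'.le)
            _ = Cω / ε' := mul_one _)
  have hf3'int : Integrable (fun ω => A ω * u₃ (Lstar ω) * η₁' (Lstar ω)) μ :=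
    bddInt ((hA.mul (hu₃meas.comp hLstar)).mul (hη₁'meas.comp hLstar))
      (fun ω => by
        calc |A ω * u₃ (Lstar ω) * η₁' (Lstar ω)|
            = |A ω * u₃ (Lstar ω)| * |η₁' (Lstar ω)| := abs_mul _ _
          _ ≤ (1 / ε') * 1 := mul_le_mul (hboundA _ (1 / ε') (fun ω => hu₃bd _) ω)
              (hη₁'bd _) (abs_nonneg _) (div_nonneg zero_le_one hε'.le)
          _ = 1 / ε' := mul_one _)
  have hf4int : Integrable (fun ω => A ω * ω₁' (Lstar ω)) μ :=
    bddInt (hA.mul (hω₁'meas.comp hLstar)) (hboundA _ 1 fun ω => hω₁'bd _)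
  -- named integrals
  -- Term 1
  have hT1 : ∫ ω, A ω * (1 - R ω / ηbar₁ (Lstar ω)) * ωbar₁ (Lstar ω) ∂μ
      = (∫ ω, A ω * ωbar₁ (Lstar ω) ∂μ) - ∫ ω, A ω * u₂ (Lstar ω) * η (Lstar ω) 1 ∂μ := by
    have hptw : ∀ ω, A ω * (1 - R ω / ηbar₁ (Lstar ω)) * ωbar₁ (Lstar ω)
        = A ω * ωbar₁ (Lstar ω) - A ω * u₂ (Lstar ω) * R ω := by
      intro ω
      rw [hu₂def]
      field_simp
    calc ∫ ω, A ω * (1 - R ω / ηbar₁ (Lstar ω)) * ωbar₁ (Lstar ω) ∂μ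
        = ∫ ω, (A ω * ωbar₁ (Lstar ω) - A ω * u₂ (Lstar ω) * R ω) ∂μ :=
          integral_congr_ae (Filter.Eventually.of_forall hptw)
      _ = (∫ ω, A ω * ωbar₁ (Lstar ω) ∂μ) - ∫ ω, A ω * u₂ (Lstar ω) * R ω ∂μ :=
          integral_sub hf1int hf2int
      _ = (∫ ω, A ω * ωbar₁ (Lstar ω) ∂μ) - ∫ ω, A ω * u₂ (Lstar ω) * η (Lstar ω) 1 ∂μ := by
          rw [hstep3 u₂ hu₂meas (Cω / ε') hu₂bd]
  -- Term 2
  have hT2 : ∫ ω, A ω * R ω * g (L ω) (A ω) / ηbar₁ (Lstar ω) ∂μ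
      = ∫ ω, A ω * u₃ (Lstar ω) * η (Lstar ω) 1 ∂μ := by
    have hinv : Measurable fun x => (ηbar₁ x)⁻¹ := hηbar₁.inv
    have hinvbd : ∀ x, |(ηbar₁ x)⁻¹| ≤ ε'⁻¹ := by
      intro x
      rw [abs_inv, abs_of_pos (hηbar₁pos x)]
      exact inv_anti₀ hε' (hηbar₁lb x)
    calc ∫ ω, A ω * R ω * g (L ω) (A ω) / ηbar₁ (Lstar ω) ∂μ
        = ∫ ω, A ω * R ω * ((ηbar₁ (Lstar ω))⁻¹ * g (L ω) (A ω)) ∂μ :=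
          integral_congr_ae (Filter.Eventually.of_forall fun ω => by ring)
      _ = ∫ ω, A ω * R ω * ((ηbar₁ (Lstar ω))⁻¹ * ω₁' (Lstar ω)) ∂μ :=
          hstep2 (fun x => (ηbar₁ x)⁻¹) hinv ε'⁻¹ hinvbd
      _ = ∫ ω, A ω * u₃ (Lstar ω) * R ω ∂μ :=
          integral_congr_ae (Filter.Eventually.of_forall fun ω => by
            rw [hu₃def]; ring)
      _ = ∫ ω, A ω * u₃ (Lstar ω) * η (Lstar ω) 1 ∂μ := hstep3 u₃ hu₃meas (1 / ε') hu₃bd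
  -- Term 3
  have hT3 : ∫ ω, A ω * ω₁ (Lstar ω) ∂μ = ∫ ω, A ω * ω₁' (Lstar ω) ∂μ := by
    refine integral_congr_ae ?_
    filter_upwards [hω₁repl] with ω h
    rcases hA01 ω with h0 | h1
    · rw [h0, zero_mul, zero_mul]
    · rw [h1, one_mul, one_mul, h h1]
  -- η replacements in the J₂, J₃ terms
  have hJ2 : ∫ ω, A ω * u₂ (Lstar ω) * η (Lstar ω) 1 ∂μ
      = ∫ ω, A ω * u₂ (Lstar ω) * η₁' (Lstar ω) ∂μ := by
    refine integral_congr_ae ?_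
    filter_upwards [hηrepl] with ω h
    rcases hA01 ω with h0 | h1
    · rw [h0]; ring
    · rw [h h1]
  have hJ3 : ∫ ω, A ω * u₃ (Lstar ω) * η (Lstar ω) 1 ∂μ
      = ∫ ω, A ω * u₃ (Lstar ω) * η₁' (Lstar ω) ∂μ := by
    refine integral_congr_ae ?_
    filter_upwards [hηrepl] with ω h
    rcases hA01 ω with h0 | h1
    · rw [h0]; ring
    · rw [h h1]
  -- the right-hand side
  have hRHS : ∫ ω, A ω * (ωbar₁ (Lstar ω) - ω₁ (Lstar ω)) * (1 - η (Lstar ω) 1 / ηbar₁ (Lstar ω)) ∂μ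
      = (∫ ω, A ω * ωbar₁ (Lstar ω) ∂μ) - (∫ ω, A ω * u₂ (Lstar ω) * η₁' (Lstar ω) ∂μ)
        + (∫ ω, A ω * u₃ (Lstar ω) * η₁' (Lstar ω) ∂μ) - ∫ ω, A ω * ω₁' (Lstar ω) ∂μ := by
    have hsplit : ∫ ω, (A ω * ωbar₁ (Lstar ω) - A ω * u₂ (Lstar ω) * η₁' (Lstar ω)
          + A ω * u₃ (Lstar ω) * η₁' (Lstar ω) - A ω * ω₁' (Lstar ω)) ∂μ
        = (∫ ω, A ω * ωbar₁ (Lstar ω) ∂μ) - (∫ ω, A ω * u₂ (Lstar ω) * η₁' (Lstar ω) ∂μ)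
          + (∫ ω, A ω * u₃ (Lstar ω) * η₁' (Lstar ω) ∂μ) - ∫ ω, A ω * ω₁' (Lstar ω) ∂μ := by
      have i12 : Integrable (fun ω => A ω * ωbar₁ (Lstar ω)
          - A ω * u₂ (Lstar ω) * η₁' (Lstar ω)) μ := hf1int.sub hf2'int
      have i123 : Integrable (fun ω => A ω * ωbar₁ (Lstar ω)
          - A ω * u₂ (Lstar ω) * η₁' (Lstar ω) + A ω * u₃ (Lstar ω) * η₁' (Lstar ω)) μ :=
        i12.add hf3'int
      have e3 : ∫ ω, (A ω * ωbar₁ (Lstar ω) - A ω * u₂ (Lstar ω) * η₁' (Lstar ω)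
            + A ω * u₃ (Lstar ω) * η₁' (Lstar ω) - A ω * ω₁' (Lstar ω)) ∂μ
          = (∫ ω, (A ω * ωbar₁ (Lstar ω) - A ω * u₂ (Lstar ω) * η₁' (Lstar ω)
            + A ω * u₃ (Lstar ω) * η₁' (Lstar ω)) ∂μ) - ∫ ω, A ω * ω₁' (Lstar ω) ∂μ :=
        integral_sub i123 hf4int
      have e2 : ∫ ω, (A ω * ωbar₁ (Lstar ω) - A ω * u₂ (Lstar ω) * η₁' (Lstar ω)
            + A ω * u₃ (Lstar ω) * η₁' (Lstar ω)) ∂μ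
          = (∫ ω, (A ω * ωbar₁ (Lstar ω) - A ω * u₂ (Lstar ω) * η₁' (Lstar ω)) ∂μ)
            + ∫ ω, A ω * u₃ (Lstar ω) * η₁' (Lstar ω) ∂μ :=
        integral_add i12 hf3'int
      have e1 : ∫ ω, (A ω * ωbar₁ (Lstar ω) - A ω * u₂ (Lstar ω) * η₁' (Lstar ω)) ∂μ
          = (∫ ω, A ω * ωbar₁ (Lstar ω) ∂μ) - ∫ ω, A ω * u₂ (Lstar ω) * η₁' (Lstar ω) ∂μ :=
        integral_sub hf1int hf2'int
      rw [e3, e2, e1]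
    rw [← hsplit]
    refine integral_congr_ae ?_
    filter_upwards [hηrepl, hω₁repl] with ω h1 h2
    rcases hA01 ω with h0 | hA1
    · rw [h0]; ring
    · rw [hu₂def, hu₃def]
      simp only
      rw [hA1, ← h1 hA1, ← h2 hA1]
      field_simp
      ring
  rw [hT1, hT2, hT3, hJ2, hJ3, hRHS]
end

section
/- (Lemma S2, β-remainder for the non-efficient influence function.) Under the setup (with eligibility E := g(L) not depending on A) and Assumptions A4 and A5, let the true nuisance functions be: μ₀(L*,L) a version of E[Y | σ(L*,L)] under μ(·|{A=0,R=1}) with μ₀(L*,L) square-integrable; u(L*,L) a version of E[A | σ(L*,L)] under μ(·|{R=1}) with δ ≤ u ≤ 1−δ a.s.; and ν(L*) a version of E[E·(Y − μ₀(L*,L)) | σ(L*)] under μ(·|{A=1,R=1}). Let η̄₁, ν̄ : ℝ^p → ℝ and μ̄₀, ū : ℝ^p × ℝ^q → ℝ be bounded measurable with η̄₁ ≥ ε' > 0 and δ' ≤ ū ≤ 1−δ' everywhere. Then E[A·(1 − R/η̄₁(L*))·ν̄(L*) + (R·E/η̄₁(L*))·(Y − μ̄₀(L*,L))·{A − (1−A)·(ū/(1−ū))(L*,L)}]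 − E[A·ν(L*)] = E[A·(1 − η₁(L*)/η̄₁(L*))·(ν̄(L*) − ν(L*))] + E[(R·E/η̄₁(L*))·(μ₀ − μ̄₀)(L*,L)·((u − ū)/(1−ū))(L*,L)]. -/
open MeasureTheory ProbabilityTheory
open scoped ENNReal ProbabilityTheory

set_option linter.unusedVariables false

set_option maxHeartbeats 1000000

section Helpers

variable {Ω : Type*} [m0 : MeasurableSpace Ω] {μ : Measure Ω}

lemma hlp_integrable_of_bound [IsFiniteMeasure μ] {f : Ω → ℝ}
    (hf : AEStronglyMeasurable f μ) (C : ℝ) (h : ∀ᵐ ω ∂μ, |f ω| ≤ C) :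
    Integrable f μ :=
  (integrable_const C).mono' hf (by simpa [Real.norm_eq_abs] using h)

lemma hlp_integrable_bdd_mul {b f : Ω → ℝ}
    (hb : AEStronglyMeasurable b μ) (C : ℝ) (hbC : ∀ ω, |b ω| ≤ C)
    (hf : Integrable f μ) : Integrable (fun ω => b ω * f ω) μ :=
  Integrable.bdd_mul hf hb (ae_of_all _ (by simpa [Real.norm_eq_abs] using hbC))

end Helpers

section Helpers2

lemma hlp_integral_mul_condexp {Ω : Type*} {m : MeasurableSpace Ω}
    [m0 : MeasurableSpace Ω] (hm : m ≤ m0)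
    (ν : Measure Ω) [IsProbabilityMeasure ν]
    {f X h : Ω → ℝ} (hf : Measurable[m] f)
    (hX : Integrable X ν) (hfX : Integrable (fun ω => f ω * X ω) ν)
    (hh : h =ᵐ[ν] ν[X|m]) :
    ∫ ω, f ω * X ω ∂ν = ∫ ω, f ω * h ω ∂ν := by
  haveI : SigmaFinite (ν.trim hm) := inferInstance
  have hfX' : Integrable (f * X) ν := hfX
  have e1 := condExp_mul_of_stronglyMeasurable_left hf.stronglyMeasurable hfX' hX
  calc ∫ ω, f ω * X ω ∂ν = ∫ ω, (f * X) ω ∂ν := rfl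
    _ = ∫ ω, (ν[f * X|m]) ω ∂ν := (integral_condExp hm).symm
    _ = ∫ ω, f ω * h ω ∂ν := by
        refine integral_congr_ae ?_
        filter_upwards [e1, hh] with ω h1 h2
        rw [h1, Pi.mul_apply, h2]

end Helpers2

section Helpers3

variable {Ω : Type*} [m0 : MeasurableSpace Ω] {μ : Measure Ω}

lemma hlp_integral_indicator_cond [IsFiniteMeasure μ] {S : Set Ω} (hS : MeasurableSet S)
    (h0 : μ S ≠ 0) (f : Ω → ℝ) :
    ∫ ω, S.indicator f ω ∂μ = (μ S).toReal * ∫ ω, f ω ∂μ[|S] := by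
  rw [integral_indicator hS, ProbabilityTheory.cond, integral_smul_measure, smul_eq_mul,
    ← mul_assoc, ENNReal.toReal_inv, mul_inv_cancel₀, one_mul]
  exact ENNReal.toReal_ne_zero.mpr ⟨h0, measure_ne_top μ S⟩

lemma hlp_integrable_cond {S : Set Ω} {f : Ω → ℝ} (hf : Integrable f μ) (h0 : μ S ≠ 0) :
    Integrable f μ[|S] := by
  rw [ProbabilityTheory.cond]
  exact (hf.restrict).smul_measure (ENNReal.inv_ne_top.mpr h0)

lemma hlp_integrable_of_cond [IsFiniteMeasure μ] {S : Set Ω} {f : Ω → ℝ}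
    (hS : MeasurableSet S) (h0 : μ S ≠ 0)
    (hf : Integrable f μ[|S]) : Integrable (S.indicator f) μ := by
  rw [ProbabilityTheory.cond] at hf
  rw [integrable_smul_measure (ENNReal.inv_ne_zero.mpr (measure_ne_top μ S))
    (ENNReal.inv_ne_top.mpr h0)] at hf
  exact (integrable_indicator_iff hS).2 hf

lemma hlp_mul3_bound {a b c A B C : ℝ} (ha : |a| ≤ A) (hb : |b| ≤ B) (hc : |c| ≤ C) :
    |a * b * c| ≤ A * B * C := by
  have hA : 0 ≤ A := le_trans (abs_nonneg _) ha
  have hB : 0 ≤ B := le_trans (abs_nonneg _) hb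
  rw [abs_mul, abs_mul]
  exact mul_le_mul (mul_le_mul ha hb (abs_nonneg _) hA) hc (abs_nonneg _) (mul_nonneg hA hB)

lemma hlp_div_bound {r b εp C : ℝ} (hr : |r| ≤ C) (hb : εp ≤ b) (hεp : 0 < εp) :
    |r / b| ≤ C * εp⁻¹ := by
  have hb0 : 0 < b := lt_of_lt_of_le hεp hb
  have hC : 0 ≤ C := le_trans (abs_nonneg _) hr
  rw [abs_div, abs_of_pos hb0, div_eq_mul_inv]
  have : b⁻¹ ≤ εp⁻¹ := by
    rw [inv_le_inv₀ hb0 hεp]; exact hb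
  exact mul_le_mul hr this (inv_nonneg.2 hb0.le) hC

end Helpers3

/-- Truncation argument: integrability of `A * φ` from integrability of `A * R * |φ|`
when `E[R | m] ≥ ε₀` on `{A = 1}`. -/
lemma hlp_integrable_trunc {Ω : Type*} {m : MeasurableSpace Ω} [m0 : MeasurableSpace Ω]
    {μ : Measure Ω} [IsProbabilityMeasure μ] (hm : m ≤ m0)
    {A R φ h : Ω → ℝ}
    (hAm : Measurable[m] A) (hφm : Measurable[m] φ)
    (hA01 : ∀ ω, A ω = 0 ∨ A ω = 1) (hR01 : ∀ ω, R ω = 0 ∨ R ω = 1)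
    (hRm : Measurable[m0] R)
    (hver : h =ᵐ[μ] μ[R|m]) {ε₀ : ℝ} (hε₀ : 0 < ε₀)
    (hlb : ∀ᵐ ω ∂μ, A ω = 1 → ε₀ ≤ h ω)
    (hint : Integrable (fun ω => A ω * (R ω * |φ ω|)) μ) :
    Integrable (fun ω => A ω * φ ω) μ := by
  have hA0 : ∀ ω, 0 ≤ A ω := fun ω => by rcases hA01 ω with h'|h' <;> simp [h']
  have hA1 : ∀ ω, A ω ≤ 1 := fun ω => by rcases hA01 ω with h'|h' <;> simp [h']
  have hR0 : ∀ ω, 0 ≤ R ω := fun ω => by rcases hR01 ω with h'|h' <;> simp [h']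
  have hR1 : ∀ ω, R ω ≤ 1 := fun ω => by rcases hR01 ω with h'|h' <;> simp [h']
  set F : ℕ → Ω → ℝ := fun n ω => A ω * min |φ ω| n with hF
  have hFm : ∀ n, Measurable[m] (F n) := fun n =>
    (measurable_fst.mul ((measurable_snd.abs).min measurable_const)).comp
      (hAm.prodMk hφm)
  have hFm0 : ∀ n, Measurable[m0] (F n) := fun n => (hFm n).mono hm le_rfl
  have hFnn : ∀ n ω, 0 ≤ F n ω := fun n ω =>
    mul_nonneg (hA0 ω) (le_min (abs_nonneg _) (Nat.cast_nonneg n))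
  have hFle : ∀ n ω, F n ω ≤ n := fun n ω => by
    have h1 : min |φ ω| (n:ℝ) ≤ n := min_le_right _ _
    have h2 : 0 ≤ min |φ ω| (n:ℝ) := le_min (abs_nonneg _) (Nat.cast_nonneg n)
    calc A ω * min |φ ω| (n:ℝ) ≤ 1 * min |φ ω| (n:ℝ) :=
          mul_le_mul_of_nonneg_right (hA1 ω) h2
      _ = min |φ ω| (n:ℝ) := one_mul _
      _ ≤ n := h1
  have hFint : ∀ n, Integrable (F n) μ := fun n =>
    hlp_integrable_of_bound (μ := μ) (Measurable.aestronglyMeasurable (hFm0 n)) n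
      (ae_of_all _ fun ω => by rw [abs_of_nonneg (hFnn n ω)]; exact hFle n ω)
  have hRint : Integrable R μ :=
    hlp_integrable_of_bound (μ := μ) hRm.aestronglyMeasurable 1
      (ae_of_all _ fun ω => by rw [abs_of_nonneg (hR0 ω)]; exact hR1 ω)
  have hhm : AEStronglyMeasurable h μ :=
    ((stronglyMeasurable_condExp.mono hm).aestronglyMeasurable).congr hver.symm
  have hh01 : ∀ᵐ ω ∂μ, 0 ≤ h ω ∧ h ω ≤ 1 := by
    have h0' : (0:Ω → ℝ) ≤ᵐ[μ] μ[R|m] := condExp_nonneg (ae_of_all _ hR0)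
    have h1' : μ[R|m] ≤ᵐ[μ] μ[(fun _ => (1:ℝ))|m] :=
      condExp_mono hRint (integrable_const 1) (ae_of_all _ hR1)
    rw [condExp_const (μ := μ) hm (1:ℝ)] at h1'
    filter_upwards [h0', h1', hver] with ω a b d
    exact ⟨d ▸ a, d ▸ b⟩
  set M := ∫ ω, A ω * (R ω * |φ ω|) ∂μ with hM
  have hbound : ∀ n, ∫ ω, F n ω ∂μ ≤ ε₀⁻¹ * M := by
    intro n
    have hFRint : Integrable (fun ω => F n ω * R ω) μ :=
      hlp_integrable_of_bound (μ := μ) (Measurable.aestronglyMeasurable ((hFm0 n).mul hRm)) n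
        (ae_of_all _ fun ω => by
          rw [abs_mul, abs_of_nonneg (hFnn n ω), abs_of_nonneg (hR0 ω)]
          calc F n ω * R ω ≤ F n ω * 1 :=
                mul_le_mul_of_nonneg_left (hR1 ω) (hFnn n ω)
            _ = F n ω := mul_one _
            _ ≤ n := hFle n ω)
    have e1 : ∫ ω, F n ω * R ω ∂μ = ∫ ω, F n ω * h ω ∂μ :=
      hlp_integral_mul_condexp hm μ (hFm n) hRint hFRint hver
    have hFh_int : Integrable (fun ω => F n ω * h ω) μ :=
      hlp_integrable_of_bound (μ := μ)
        ((Measurable.aestronglyMeasurable (hFm0 n)).mul hhm) n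
        (by filter_upwards [hh01] with ω hw
            rw [abs_mul, abs_of_nonneg (hFnn n ω), abs_of_nonneg hw.1]
            calc F n ω * h ω ≤ F n ω * 1 :=
                  mul_le_mul_of_nonneg_left hw.2 (hFnn n ω)
              _ = F n ω := mul_one _
              _ ≤ n := hFle n ω)
    have low : ε₀ * ∫ ω, F n ω ∂μ ≤ ∫ ω, F n ω * h ω ∂μ := by
      rw [← integral_const_mul]
      refine integral_mono_ae ((hFint n).const_mul ε₀) hFh_int ?_
      filter_upwards [hlb] with ω hω
      rcases hA01 ω with h'|h'
      · simp [hF, h']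
      · have h3 := hω h'
        have h2 : 0 ≤ min |φ ω| (n:ℝ) := le_min (abs_nonneg _) (Nat.cast_nonneg n)
        simp only [hF, h', one_mul]
        nlinarith
    have up : ∫ ω, F n ω * R ω ∂μ ≤ M := by
      refine integral_mono hFRint hint (fun ω => ?_)
      have h1 : min |φ ω| (n:ℝ) ≤ |φ ω| := min_le_left _ _
      have h2 : 0 ≤ min |φ ω| (n:ℝ) := le_min (abs_nonneg _) (Nat.cast_nonneg n)
      have h3 : A ω * R ω * min |φ ω| (n:ℝ) ≤ A ω * R ω * |φ ω| :=
        mul_le_mul_of_nonneg_left h1 (mul_nonneg (hA0 ω) (hR0 ω))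
      simp only [hF]
      nlinarith [h3]
    have := le_trans low (le_of_eq e1.symm)
    have h4 : ε₀ * ∫ ω, F n ω ∂μ ≤ M := le_trans this up
    have h5 := mul_le_mul_of_nonneg_left h4 (inv_nonneg.2 hε₀.le)
    rwa [← mul_assoc, inv_mul_cancel₀ hε₀.ne', one_mul] at h5
  have key : (∫⁻ ω, ENNReal.ofReal (A ω * |φ ω|) ∂μ) ≤ ENNReal.ofReal (ε₀⁻¹ * M) := by
    have hsup : ∀ ω, (⨆ n, ENNReal.ofReal (F n ω)) = ENNReal.ofReal (A ω * |φ ω|) := by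
      intro ω
      apply le_antisymm
      · refine iSup_le fun n => ENNReal.ofReal_le_ofReal ?_
        have h1 : min |φ ω| (n:ℝ) ≤ |φ ω| := min_le_left _ _
        simp only [hF]
        exact mul_le_mul_of_nonneg_left h1 (hA0 ω)
      · refine le_iSup_of_le ⌈|φ ω|⌉₊ (le_of_eq ?_)
        simp only [hF]
        rw [min_eq_left (Nat.le_ceil _)]
    calc (∫⁻ ω, ENNReal.ofReal (A ω * |φ ω|) ∂μ)
        = ∫⁻ ω, ⨆ n, ENNReal.ofReal (F n ω) ∂μ := by
          refine lintegral_congr fun ω => (hsup ω).symm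
      _ = ⨆ n, ∫⁻ ω, ENNReal.ofReal (F n ω) ∂μ := by
          refine lintegral_iSup (fun n => (hFm0 n).ennreal_ofReal) ?_
          intro i j hij ω
          refine ENNReal.ofReal_le_ofReal ?_
          simp only [hF]
          have h1 : min |φ ω| (i:ℝ) ≤ min |φ ω| (j:ℝ) :=
            min_le_min le_rfl (Nat.cast_le.2 hij)
          exact mul_le_mul_of_nonneg_left h1 (hA0 ω)
      _ ≤ ENNReal.ofReal (ε₀⁻¹ * M) := by
          refine iSup_le fun n => ?_
          rw [← ofReal_integral_eq_lintegral_ofReal (hFint n) (ae_of_all _ (hFnn n))]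
          exact ENNReal.ofReal_le_ofReal (hbound n)
  have hAφm : Measurable[m0] (fun ω => A ω * φ ω) := (hAm.mono hm le_rfl).mul (hφm.mono hm le_rfl)
  refine ⟨hAφm.aestronglyMeasurable, ?_⟩
  have hnn : ∀ ω, (‖A ω * φ ω‖₊ : ℝ≥0∞) = ENNReal.ofReal (A ω * |φ ω|) := by
    intro ω
    rw [← ENNReal.ofReal_coe_nnreal, coe_nnnorm, Real.norm_eq_abs, abs_mul, abs_of_nonneg (hA0 ω)]
  show (∫⁻ ω, (‖A ω * φ ω‖₊ : ℝ≥0∞) ∂μ) < ∞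
  calc (∫⁻ ω, (‖A ω * φ ω‖₊ : ℝ≥0∞) ∂μ)
      = ∫⁻ ω, ENNReal.ofReal (A ω * |φ ω|) ∂μ := lintegral_congr hnn
    _ ≤ ENNReal.ofReal (ε₀⁻¹ * M) := key
    _ < ∞ := ENNReal.ofReal_lt_top

lemma hlp_mul2_bound {a b A B : ℝ} (ha : |a| ≤ A) (hb : |b| ≤ B) : |a * b| ≤ A * B := by
  rw [abs_mul]
  exact mul_le_mul ha hb (abs_nonneg _) (le_trans (abs_nonneg _) ha)

lemma hlp_abs_sub (a b : ℝ) : |a - b| ≤ |a| + |b| := by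
  rw [sub_eq_add_neg]
  exact (abs_add_le _ _).trans (by rw [abs_neg])

/-- **Lemma S2 (β-remainder for the non-efficient influence function).** -/
theorem stmt_11
    {Ω : Type*} [𝓕 : MeasurableSpace Ω] [StandardBorelSpace Ω] [Nonempty Ω]
    (μ : Measure Ω) [IsProbabilityMeasure μ]
    {p q : ℕ}
    (Lstar : Ω → Fin p → ℝ) (L : Ω → Fin q → ℝ) (A R Y : Ω → ℝ)
    (hLstar : Measurable Lstar) (hL : Measurable L)
    (hA : Measurable A) (hR : Measurable R) (hY : Measurable Y)
    (hA01 : ∀ ω, A ω = 0 ∨ A ω = 1) (hR01 : ∀ ω, R ω = 0 ∨ R ω = 1)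
    (hY2 : MemLp Y 2 μ)
    -- eligibility does not depend on treatment: E = g(L)
    (g : (Fin q → ℝ) → ℝ) (hg : Measurable g)
    (hg01 : ∀ x, g x = 0 ∨ g x = 1)
    -- Assumption A4 (MAR): R ⫫ (L, Y) | σ(L*, A)
    (hMAR : CondIndepFun (MeasurableSpace.comap (fun ω => (Lstar ω, A ω)) inferInstance)
      ((hLstar.prodMk hA).comap_le) R (fun ω => (L ω, Y ω)) μ)
    -- Assumption A5 (missingness positivity)
    (η : (Fin p → ℝ) → ℝ → ℝ) (hη : Measurable (Function.uncurry η))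
    (hηver : (fun ω => η (Lstar ω) (A ω)) =ᵐ[μ]
      μ[R|MeasurableSpace.comap (fun ω => (Lstar ω, A ω)) inferInstance])
    (ε₀ : ℝ) (hε₀ : 0 < ε₀)
    (hηpos : ∀ᵐ ω ∂μ, ε₀ ≤ η (Lstar ω) 0 ∧ ε₀ ≤ η (Lstar ω) 1)
    -- positivity of relevant events
    (hA1R : 0 < μ {ω | A ω = 1 ∧ R ω = 1})
    (hA0R : 0 < μ {ω | A ω = 0 ∧ R ω = 1})
    (hRpos : 0 < μ {ω | R ω = 1})
    -- true outcome regression among untreated complete cases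
    (μ₀ : (Fin p → ℝ) → (Fin q → ℝ) → ℝ) (hμ₀ : Measurable (Function.uncurry μ₀))
    (hμ₀ver : (fun ω => μ₀ (Lstar ω) (L ω)) =ᵐ[μ[|{ω | A ω = 0 ∧ R ω = 1}]]
      (μ[|{ω | A ω = 0 ∧ R ω = 1}])[Y|MeasurableSpace.comap
          (fun ω => (Lstar ω, L ω)) inferInstance])
    (hμ₀2 : MemLp (fun ω => μ₀ (Lstar ω) (L ω)) 2 μ)
    -- true complete-case treatment propensity
    (u : (Fin p → ℝ) → (Fin q → ℝ) → ℝ) (hu : Measurable (Function.uncurry u))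
    (huver : (fun ω => u (Lstar ω) (L ω)) =ᵐ[μ[|{ω | R ω = 1}]]
      (μ[|{ω | R ω = 1}])[A|MeasurableSpace.comap
          (fun ω => (Lstar ω, L ω)) inferInstance])
    (δ : ℝ) (hδ : 0 < δ)
    (hubd : ∀ᵐ ω ∂(μ[|{ω | R ω = 1}]),
      δ ≤ u (Lstar ω) (L ω) ∧ u (Lstar ω) (L ω) ≤ 1 - δ)
    -- true nested nuisance ν among treated complete cases
    (ν : (Fin p → ℝ) → ℝ) (hν : Measurable ν)
    (hνver : (fun ω => ν (Lstar ω)) =ᵐ[μ[|{ω | A ω = 1 ∧ R ω = 1}]]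
      (μ[|{ω | A ω = 1 ∧ R ω = 1}])[(fun ω => g (L ω) * (Y ω - μ₀ (Lstar ω) (L ω)))|
        MeasurableSpace.comap Lstar inferInstance])
    -- estimated (barred) nuisances: bounded measurable
    (ηbar₁ νbar : (Fin p → ℝ) → ℝ) (hηbar₁ : Measurable ηbar₁) (hνbar : Measurable νbar)
    (hηbar₁bd : ∃ C, ∀ x, |ηbar₁ x| ≤ C) (hνbarbd : ∃ C, ∀ x, |νbar x| ≤ C)
    (ε' : ℝ) (hε' : 0 < ε') (hηbar₁lb : ∀ x, ε' ≤ ηbar₁ x)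
    (μbar₀ ubar : (Fin p → ℝ) → (Fin q → ℝ) → ℝ)
    (hμbar₀ : Measurable (Function.uncurry μbar₀)) (hubar : Measurable (Function.uncurry ubar))
    (hμbar₀bd : ∃ C, ∀ x y, |μbar₀ x y| ≤ C)
    (δ' : ℝ) (hδ' : 0 < δ')
    (hubarbd : ∀ x y, δ' ≤ ubar x y ∧ ubar x y ≤ 1 - δ') :
    (∫ ω, A ω * (1 - R ω / ηbar₁ (Lstar ω)) * νbar (Lstar ω)
        + (R ω * g (L ω) / ηbar₁ (Lstar ω)) * (Y ω - μbar₀ (Lstar ω) (L ω))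
          * (A ω - (1 - A ω) * (ubar (Lstar ω) (L ω) / (1 - ubar (Lstar ω) (L ω)))) ∂μ)
      - ∫ ω, A ω * ν (Lstar ω) ∂μ
    = ∫ ω, A ω * (1 - η (Lstar ω) 1 / ηbar₁ (Lstar ω)) * (νbar (Lstar ω) - ν (Lstar ω)) ∂μ
      + ∫ ω, (R ω * g (L ω) / ηbar₁ (Lstar ω))
          * (μ₀ (Lstar ω) (L ω) - μbar₀ (Lstar ω) (L ω))
          * ((u (Lstar ω) (L ω) - ubar (Lstar ω) (L ω)) / (1 - ubar (Lstar ω) (L ω))) ∂μ := by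
  classical
  obtain ⟨Cν, hCν⟩ := hνbarbd
  obtain ⟨Cm, hCm⟩ := hμbar₀bd
  have hCν0 : 0 ≤ Cν := le_trans (abs_nonneg _) (hCν 0)
  have hCm0 : 0 ≤ Cm := le_trans (abs_nonneg _) (hCm 0 0)
  have hηbpos : ∀ x, (0:ℝ) < ηbar₁ x := fun x => lt_of_lt_of_le hε' (hηbar₁lb x)
  have hub1 : ∀ x y, (0:ℝ) < 1 - ubar x y := fun x y => by
    have := (hubarbd x y).2; linarith
  have hubpos : ∀ x y, (0:ℝ) < ubar x y := fun x y => lt_of_lt_of_le hδ' (hubarbd x y).1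
  -- pointwise bounds
  have hAb : ∀ ω, |A ω| ≤ 1 := fun ω => by rcases hA01 ω with h|h <;> simp [h]
  have hA0 : ∀ ω, 0 ≤ A ω := fun ω => by rcases hA01 ω with h|h <;> simp [h]
  have hA1' : ∀ ω, A ω ≤ 1 := fun ω => by rcases hA01 ω with h|h <;> simp [h]
  have h1Ab : ∀ ω, |1 - A ω| ≤ 1 := fun ω => by rcases hA01 ω with h|h <;> simp [h]
  have hRb : ∀ ω, |R ω| ≤ 1 := fun ω => by rcases hR01 ω with h|h <;> simp [h]
  have hR0 : ∀ ω, 0 ≤ R ω := fun ω => by rcases hR01 ω with h|h <;> simp [h]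
  have hR1' : ∀ ω, R ω ≤ 1 := fun ω => by rcases hR01 ω with h|h <;> simp [h]
  have hgb : ∀ ω, |g (L ω)| ≤ 1 := fun ω => by rcases hg01 (L ω) with h|h <;> simp [h]
  have hinvb : ∀ ω, |(ηbar₁ (Lstar ω))⁻¹| ≤ ε'⁻¹ := fun ω => by
    rw [abs_of_pos (inv_pos.2 (hηbpos _)), inv_le_inv₀ (hηbpos _) hε']
    exact hηbar₁lb _
  have hiub : ∀ ω, |(1 - ubar (Lstar ω) (L ω))⁻¹| ≤ δ'⁻¹ := fun ω => by
    rw [abs_of_pos (inv_pos.2 (hub1 _ _)), inv_le_inv₀ (hub1 _ _) hδ']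
    have := (hubarbd (Lstar ω) (L ω)).2; linarith
  have hWb : ∀ ω, |(ubar (Lstar ω) (L ω) / (1 - ubar (Lstar ω) (L ω)))| ≤ (1 - δ') * δ'⁻¹ := fun ω => by
    rw [div_eq_mul_inv]
    refine hlp_mul2_bound ?_ (hiub ω)
    rw [abs_of_pos (hubpos _ _)]
    exact (hubarbd (Lstar ω) (L ω)).2
  -- measurability of composites
  have mgL : Measurable fun ω => g (L ω) := hg.comp hL
  have mνbarL : Measurable fun ω => νbar (Lstar ω) := hνbar.comp hLstar
  have mνL : Measurable fun ω => ν (Lstar ω) := hν.comp hLstar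
  have mηbarL : Measurable fun ω => ηbar₁ (Lstar ω) := hηbar₁.comp hLstar
  have minv : Measurable fun ω => (ηbar₁ (Lstar ω))⁻¹ := mηbarL.inv
  have mη1 : Measurable fun ω => η (Lstar ω) 1 := hη.comp (hLstar.prodMk measurable_const)
  have mμ0 : Measurable fun ω => μ₀ (Lstar ω) (L ω) := hμ₀.comp (hLstar.prodMk hL)
  have mμb : Measurable fun ω => μbar₀ (Lstar ω) (L ω) := hμbar₀.comp (hLstar.prodMk hL)
  have mub : Measurable fun ω => ubar (Lstar ω) (L ω) := hubar.comp (hLstar.prodMk hL)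
  have muL : Measurable fun ω => u (Lstar ω) (L ω) := hu.comp (hLstar.prodMk hL)
  have m1c : Measurable (fun _ : Ω => (1:ℝ)) := measurable_const
  have mW : Measurable fun ω => (ubar (Lstar ω) (L ω) / (1 - ubar (Lstar ω) (L ω))) := mub.div (measurable_const.sub mub)
  have miu : Measurable fun ω => (1 - ubar (Lstar ω) (L ω))⁻¹ := (measurable_const.sub mub).inv
  -- sub-σ-algebras
  have hm1 : MeasurableSpace.comap (fun ω => (Lstar ω, A ω)) inferInstance ≤ 𝓕 := (hLstar.prodMk hA).comap_le
  have hm2 : MeasurableSpace.comap (fun ω => (Lstar ω, L ω)) inferInstance ≤ 𝓕 := (hLstar.prodMk hL).comap_le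
  have hm0 : MeasurableSpace.comap Lstar inferInstance ≤ 𝓕 := hLstar.comap_le
  have hbase1 : Measurable[MeasurableSpace.comap (fun ω => (Lstar ω, A ω)) inferInstance] fun ω => (Lstar ω, A ω) := Measurable.of_comap_le le_rfl
  have hbase2 : Measurable[MeasurableSpace.comap (fun ω => (Lstar ω, L ω)) inferInstance] fun ω => (Lstar ω, L ω) := Measurable.of_comap_le le_rfl
  have hbase0 : Measurable[MeasurableSpace.comap Lstar inferInstance] Lstar := Measurable.of_comap_le le_rfl
  -- events
  have hS1m : MeasurableSet {ω | A ω = 1 ∧ R ω = 1} :=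
    (hA (measurableSet_singleton 1)).inter (hR (measurableSet_singleton 1))
  have hS0m : MeasurableSet {ω | A ω = 0 ∧ R ω = 1} :=
    (hA (measurableSet_singleton 0)).inter (hR (measurableSet_singleton 1))
  have hSRm : MeasurableSet {ω | R ω = 1} := hR (measurableSet_singleton 1)
  have hS1ne : μ {ω | A ω = 1 ∧ R ω = 1} ≠ 0 := hA1R.ne'
  have hS0ne : μ {ω | A ω = 0 ∧ R ω = 1} ≠ 0 := hA0R.ne'
  have hSRne : μ {ω | R ω = 1} ≠ 0 := hRpos.ne'
  haveI iP1 : IsProbabilityMeasure (μ[|{ω | A ω = 1 ∧ R ω = 1}]) := cond_isProbabilityMeasure hS1ne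
  haveI iP0 : IsProbabilityMeasure (μ[|{ω | A ω = 0 ∧ R ω = 1}]) := cond_isProbabilityMeasure hS0ne
  haveI iPR : IsProbabilityMeasure (μ[|{ω | R ω = 1}]) := cond_isProbabilityMeasure hSRne
  -- indicator identities
  have hind1 : ∀ (f : Ω → ℝ) ω, A ω * (R ω * f ω) = Set.indicator {ω | A ω = 1 ∧ R ω = 1} f ω := by
    intro f ω
    by_cases hmem : ω ∈ {ω | A ω = 1 ∧ R ω = 1}
    · rw [Set.indicator_of_mem hmem]
      obtain ⟨h1, h2⟩ := hmem
      rw [h1, h2]; ring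
    · rw [Set.indicator_of_notMem hmem]
      rcases hA01 ω with h1|h1
      · rw [h1]; ring
      · rcases hR01 ω with h2|h2
        · rw [h2]; ring
        · exact absurd ⟨h1, h2⟩ hmem
  have hind0 : ∀ (f : Ω → ℝ) ω, (1 - A ω) * (R ω * f ω) = Set.indicator {ω | A ω = 0 ∧ R ω = 1} f ω := by
    intro f ω
    by_cases hmem : ω ∈ {ω | A ω = 0 ∧ R ω = 1}
    · rw [Set.indicator_of_mem hmem]
      obtain ⟨h1, h2⟩ := hmem
      rw [h1, h2]; ring
    · rw [Set.indicator_of_notMem hmem]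
      rcases hA01 ω with h1|h1
      · rcases hR01 ω with h2|h2
        · rw [h2]; ring
        · exact absurd ⟨h1, h2⟩ hmem
      · rw [h1]; ring
  have hindR : ∀ (f : Ω → ℝ) ω, R ω * f ω = Set.indicator {ω | R ω = 1} f ω := by
    intro f ω
    by_cases hmem : ω ∈ {ω | R ω = 1}
    · rw [Set.indicator_of_mem hmem]
      have h2 : R ω = 1 := hmem
      rw [h2]; ring
    · rw [Set.indicator_of_notMem hmem]
      rcases hR01 ω with h2|h2
      · rw [h2]; ring
      · exact absurd h2 hmem
  -- base integrability
  have intY : Integrable Y μ := hY2.integrable one_le_two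
  have intμ0 : Integrable (fun ω => μ₀ (Lstar ω) (L ω)) μ := hμ₀2.integrable one_le_two
  have intμb : Integrable (fun ω => μbar₀ (Lstar ω) (L ω)) μ :=
    hlp_integrable_of_bound mμb.aestronglyMeasurable Cm (ae_of_all _ fun ω => hCm _ _)
  have intYμ0 : Integrable (fun ω => (Y ω - μ₀ (Lstar ω) (L ω))) μ := by
    have := intY.sub intμ0; exact this
  have intYμb : Integrable (fun ω => (Y ω - μbar₀ (Lstar ω) (L ω))) μ := by
    have := intY.sub intμb; exact this
  have intμ0μb : Integrable (fun ω => (μ₀ (Lstar ω) (L ω) - μbar₀ (Lstar ω) (L ω))) μ := by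
    have := intμ0.sub intμb; exact this
  have intR : Integrable R μ :=
    hlp_integrable_of_bound hR.aestronglyMeasurable 1 (ae_of_all _ hRb)
  -- a.e. facts about η
  have hη01 : ∀ᵐ ω ∂μ, 0 ≤ η (Lstar ω) (A ω) ∧ η (Lstar ω) (A ω) ≤ 1 := by
    have h0' : (0:Ω → ℝ) ≤ᵐ[μ] μ[R|MeasurableSpace.comap (fun ω => (Lstar ω, A ω)) inferInstance] := condExp_nonneg (ae_of_all _ hR0)
    have h1' : μ[R|MeasurableSpace.comap (fun ω => (Lstar ω, A ω)) inferInstance] ≤ᵐ[μ] μ[(fun _ => (1:ℝ))|MeasurableSpace.comap (fun ω => (Lstar ω, A ω)) inferInstance] :=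
      condExp_mono intR (integrable_const 1) (ae_of_all _ hR1')
    rw [condExp_const (μ := μ) hm1 (1:ℝ)] at h1'
    filter_upwards [h0', h1', hηver] with ω a b d
    constructor
    · rw [d]; exact a
    · rw [d]; exact b
  have hη1A : ∀ᵐ ω ∂μ, A ω = 1 → (0 ≤ η (Lstar ω) 1 ∧ η (Lstar ω) 1 ≤ 1) := by
    filter_upwards [hη01] with ω h hA1
    rwa [hA1] at h
  have hη1pos : ∀ᵐ ω ∂μ, A ω = 1 → ε₀ ≤ η (Lstar ω) (A ω) := by
    filter_upwards [hηpos] with ω h hA1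
    rw [hA1]; exact h.2
  -- integrability of ν-related functions
  have intν1 : Integrable (fun ω => ν (Lstar ω)) (μ[|{ω | A ω = 1 ∧ R ω = 1}]) :=
    integrable_condExp.congr hνver.symm
  have intARν : Integrable (fun ω => A ω * (R ω * ν (Lstar ω))) μ := by
    have h1 := hlp_integrable_of_cond hS1m hS1ne intν1
    exact h1.congr (ae_of_all _ fun ω => (hind1 _ ω).symm)
  have intAν : Integrable (fun ω => A ω * ν (Lstar ω)) μ := by
    refine hlp_integrable_trunc hm1 (measurable_snd.comp hbase1)
      ((hν.comp measurable_fst).comp hbase1) hA01 hR01 hR hηver hε₀ hη1pos ?_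
    have he : ∀ ω, A ω * (R ω * |ν (Lstar ω)|) = |A ω * (R ω * ν (Lstar ω))| := by
      intro ω
      rw [abs_mul, abs_mul, abs_of_nonneg (hA0 ω), abs_of_nonneg (hR0 ω)]
    exact intARν.abs.congr (ae_of_all _ fun ω => (he ω).symm)
  -- m1-measurable integrands
  have hf1m : Measurable[MeasurableSpace.comap (fun ω => (Lstar ω, A ω)) inferInstance] (fun ω => A ω * νbar (Lstar ω) / ηbar₁ (Lstar ω)) :=
    ((measurable_snd.mul (hνbar.comp measurable_fst)).div
      (hηbar₁.comp measurable_fst)).comp hbase1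
  have hf2m : Measurable[MeasurableSpace.comap (fun ω => (Lstar ω, A ω)) inferInstance] (fun ω => A ω * ((ηbar₁ (Lstar ω))⁻¹ * ν (Lstar ω))) :=
    (measurable_snd.mul (((hηbar₁.comp measurable_fst).inv).mul
      (hν.comp measurable_fst))).comp hbase1
  have hinvm0 : Measurable[MeasurableSpace.comap Lstar inferInstance] (fun ω => (ηbar₁ (Lstar ω))⁻¹) := (hηbar₁.inv).comp hbase0
  have hBm : Measurable[MeasurableSpace.comap (fun ω => (Lstar ω, L ω)) inferInstance] (fun ω => (ηbar₁ (Lstar ω))⁻¹ * (g (L ω) * (ubar (Lstar ω) (L ω) / (1 - ubar (Lstar ω) (L ω))))) :=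
    (((hηbar₁.comp measurable_fst).inv).mul ((hg.comp measurable_snd).mul
      (hubar.div (measurable_const.sub hubar)))).comp hbase2
  have hGm : Measurable[MeasurableSpace.comap (fun ω => (Lstar ω, L ω)) inferInstance] (fun ω => (ηbar₁ (Lstar ω))⁻¹ * g (L ω) * (μ₀ (Lstar ω) (L ω) - μbar₀ (Lstar ω) (L ω)) * (1 - ubar (Lstar ω) (L ω))⁻¹) :=
    (((((hηbar₁.comp measurable_fst).inv).mul (hg.comp measurable_snd)).mul
      (hμ₀.sub hμbar₀)).mul ((measurable_const.sub hubar).inv)).comp hbase2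
  -- step (B): first statement integrand splits
  have int_t1 : Integrable (fun ω => A ω * (1 - R ω / ηbar₁ (Lstar ω)) * νbar (Lstar ω)) μ := by
    refine hlp_integrable_of_bound ((hA.mul (measurable_const.sub
      (hR.div mηbarL))).mul mνbarL).aestronglyMeasurable (1 * (1 + 1 * ε'⁻¹) * Cν)
      (ae_of_all _ fun ω => ?_)
    refine hlp_mul3_bound (hAb ω) ?_ (hCν _)
    refine (hlp_abs_sub _ _).trans ?_
    have h1 : |(1:ℝ)| = 1 := abs_one
    have h2 := hlp_div_bound (hRb ω) (hηbar₁lb (Lstar ω)) hε'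
    rw [h1]
    linarith
  have int_t2 : Integrable (fun ω => (R ω * g (L ω) / ηbar₁ (Lstar ω)) * (Y ω - μbar₀ (Lstar ω) (L ω)) * (A ω - (1 - A ω) * (ubar (Lstar ω) (L ω) / (1 - ubar (Lstar ω) (L ω))))) μ := by
    have hbm : Measurable (fun ω => (R ω * g (L ω) / ηbar₁ (Lstar ω))
        * (A ω - (1 - A ω) * (ubar (Lstar ω) (L ω) / (1 - ubar (Lstar ω) (L ω))))) :=
      ((hR.mul mgL).div mηbarL).mul (hA.sub ((measurable_const.sub hA).mul mW))
    refine (hlp_integrable_bdd_mul hbm.aestronglyMeasurable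
      ((1 * 1 * ε'⁻¹) * (1 + 1 * ((1 - δ') * δ'⁻¹))) (fun ω => ?_) intYμb).congr
      (ae_of_all _ fun ω => by ring)
    refine hlp_mul2_bound ?_ ?_
    · rw [div_eq_mul_inv]
      exact hlp_mul3_bound (hRb ω) (hgb ω) (hinvb ω)
    · refine (hlp_abs_sub _ _).trans ?_
      have h2 := hlp_mul2_bound (h1Ab ω) (hWb ω)
      have h1 : |A ω| ≤ 1 := hAb ω
      linarith
  have hsplit : (∫ ω, A ω * (1 - R ω / ηbar₁ (Lstar ω)) * νbar (Lstar ω)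
        + (R ω * g (L ω) / ηbar₁ (Lstar ω)) * (Y ω - μbar₀ (Lstar ω) (L ω)) * (A ω - (1 - A ω) * (ubar (Lstar ω) (L ω) / (1 - ubar (Lstar ω) (L ω)))) ∂μ)
      = (∫ ω, A ω * (1 - R ω / ηbar₁ (Lstar ω)) * νbar (Lstar ω) ∂μ) + ∫ ω, (R ω * g (L ω) / ηbar₁ (Lstar ω)) * (Y ω - μbar₀ (Lstar ω) (L ω)) * (A ω - (1 - A ω) * (ubar (Lstar ω) (L ω) / (1 - ubar (Lstar ω) (L ω)))) ∂μ :=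
    integral_add int_t1 int_t2
  -- T1 decomposition
  have int_a : Integrable (fun ω => A ω * νbar (Lstar ω)) μ :=
    hlp_integrable_of_bound (hA.mul mνbarL).aestronglyMeasurable (1 * Cν)
      (ae_of_all _ fun ω => hlp_mul2_bound (hAb ω) (hCν _))
  have int_J2 : Integrable (fun ω => (A ω * νbar (Lstar ω) / ηbar₁ (Lstar ω)) * R ω) μ := by
    refine hlp_integrable_of_bound (((hA.mul mνbarL).div mηbarL).mul
      hR).aestronglyMeasurable (1 * Cν * ε'⁻¹ * 1) (ae_of_all _ fun ω => ?_)
    exact hlp_mul2_bound (hlp_div_bound (hlp_mul2_bound (hAb ω) (hCν _))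
      (hηbar₁lb _) hε') (hRb ω)
  have hT1 : (∫ ω, A ω * (1 - R ω / ηbar₁ (Lstar ω)) * νbar (Lstar ω) ∂μ)
      = (∫ ω, A ω * νbar (Lstar ω) ∂μ) - ∫ ω, (A ω * νbar (Lstar ω) / ηbar₁ (Lstar ω)) * R ω ∂μ := by
    rw [← integral_sub int_a int_J2]
    exact integral_congr_ae (ae_of_all _ fun ω => by ring)
  have hJ2eq : (∫ ω, (A ω * νbar (Lstar ω) / ηbar₁ (Lstar ω)) * R ω ∂μ) = ∫ ω, (A ω * νbar (Lstar ω) / ηbar₁ (Lstar ω)) * η (Lstar ω) 1 ∂μ := by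
    refine (hlp_integral_mul_condexp hm1 μ hf1m intR int_J2 hηver).trans
      (integral_congr_ae (ae_of_all _ fun ω => ?_))
    rcases hA01 ω with h|h <;> simp only [h] <;> ring
  
  -- second statement integrand splits
  have int_T2a : Integrable (fun ω => A ω * (R ω * ((ηbar₁ (Lstar ω))⁻¹ * (g (L ω) * (Y ω - μbar₀ (Lstar ω) (L ω)))))) μ := by
    refine (hlp_integrable_bdd_mul ((hA.mul hR).mul
      (minv.mul mgL)).aestronglyMeasurable ((1 * 1) * (ε'⁻¹ * 1)) (fun ω => ?_)
      intYμb).congr (ae_of_all _ fun ω => by simp only [Pi.mul_apply]; ring)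
    exact hlp_mul2_bound (hlp_mul2_bound (hAb ω) (hRb ω))
      (hlp_mul2_bound (hinvb ω) (hgb ω))
  have int_T2b : Integrable (fun ω => (1 - A ω) * (R ω * ((ηbar₁ (Lstar ω))⁻¹ * (g (L ω) * ((ubar (Lstar ω) (L ω) / (1 - ubar (Lstar ω) (L ω))) * (Y ω - μbar₀ (Lstar ω) (L ω))))))) μ := by
    refine (hlp_integrable_bdd_mul (((m1c.sub hA).mul hR).mul
      ((minv.mul mgL).mul mW)).aestronglyMeasurable
      ((1 * 1) * ((ε'⁻¹ * 1) * ((1 - δ') * δ'⁻¹))) (fun ω => ?_)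
      intYμb).congr (ae_of_all _ fun ω => by simp only [Pi.mul_apply, Pi.sub_apply]; ring)
    exact hlp_mul2_bound (hlp_mul2_bound (h1Ab ω) (hRb ω))
      (hlp_mul2_bound (hlp_mul2_bound (hinvb ω) (hgb ω)) (hWb ω))
  have int_P1 : Integrable (fun ω => A ω * (R ω * ((ηbar₁ (Lstar ω))⁻¹ * (g (L ω) * (Y ω - μ₀ (Lstar ω) (L ω)))))) μ := by
    refine (hlp_integrable_bdd_mul ((hA.mul hR).mul
      (minv.mul mgL)).aestronglyMeasurable ((1 * 1) * (ε'⁻¹ * 1)) (fun ω => ?_)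
      intYμ0).congr (ae_of_all _ fun ω => by simp only [Pi.mul_apply]; ring)
    exact hlp_mul2_bound (hlp_mul2_bound (hAb ω) (hRb ω))
      (hlp_mul2_bound (hinvb ω) (hgb ω))
  have int_P2 : Integrable (fun ω => A ω * (R ω * ((ηbar₁ (Lstar ω))⁻¹ * (g (L ω) * (μ₀ (Lstar ω) (L ω) - μbar₀ (Lstar ω) (L ω)))))) μ := by
    refine (hlp_integrable_bdd_mul ((hA.mul hR).mul
      (minv.mul mgL)).aestronglyMeasurable ((1 * 1) * (ε'⁻¹ * 1)) (fun ω => ?_)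
      intμ0μb).congr (ae_of_all _ fun ω => by simp only [Pi.mul_apply]; ring)
    exact hlp_mul2_bound (hlp_mul2_bound (hAb ω) (hRb ω))
      (hlp_mul2_bound (hinvb ω) (hgb ω))
  have int_P0 : Integrable (fun ω => (1 - A ω) * (R ω * ((ηbar₁ (Lstar ω))⁻¹ * (g (L ω) * ((ubar (Lstar ω) (L ω) / (1 - ubar (Lstar ω) (L ω))) * (Y ω - μ₀ (Lstar ω) (L ω))))))) μ := by
    refine (hlp_integrable_bdd_mul (((m1c.sub hA).mul hR).mul
      ((minv.mul mgL).mul mW)).aestronglyMeasurable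
      ((1 * 1) * ((ε'⁻¹ * 1) * ((1 - δ') * δ'⁻¹))) (fun ω => ?_)
      intYμ0).congr (ae_of_all _ fun ω => by simp only [Pi.mul_apply, Pi.sub_apply]; ring)
    exact hlp_mul2_bound (hlp_mul2_bound (h1Ab ω) (hRb ω))
      (hlp_mul2_bound (hlp_mul2_bound (hinvb ω) (hgb ω)) (hWb ω))
  have int_P3 : Integrable (fun ω => (1 - A ω) * (R ω * ((ηbar₁ (Lstar ω))⁻¹ * (g (L ω) * ((ubar (Lstar ω) (L ω) / (1 - ubar (Lstar ω) (L ω))) * (μ₀ (Lstar ω) (L ω) - μbar₀ (Lstar ω) (L ω))))))) μ := by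
    refine (hlp_integrable_bdd_mul (((m1c.sub hA).mul hR).mul
      ((minv.mul mgL).mul mW)).aestronglyMeasurable
      ((1 * 1) * ((ε'⁻¹ * 1) * ((1 - δ') * δ'⁻¹))) (fun ω => ?_)
      intμ0μb).congr (ae_of_all _ fun ω => by simp only [Pi.mul_apply, Pi.sub_apply]; ring)
    exact hlp_mul2_bound (hlp_mul2_bound (h1Ab ω) (hRb ω))
      (hlp_mul2_bound (hlp_mul2_bound (hinvb ω) (hgb ω)) (hWb ω))
  have int_KR : Integrable (fun ω => (A ω * ((ηbar₁ (Lstar ω))⁻¹ * ν (Lstar ω))) * R ω) μ := by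
    refine (hlp_integrable_bdd_mul minv.aestronglyMeasurable ε'⁻¹ hinvb
      intARν).congr (ae_of_all _ fun ω => by ring)
  have int_J3 : Integrable (fun ω => (A ω * νbar (Lstar ω) / ηbar₁ (Lstar ω)) * η (Lstar ω) 1) μ := by
    refine hlp_integrable_of_bound (((hA.mul mνbarL).div mηbarL).mul
      mη1).aestronglyMeasurable ((1 * Cν * ε'⁻¹) * 1) ?_
    filter_upwards [hη1A] with ω hh
    rcases hA01 ω with h|h
    · simp only [h, zero_mul, zero_div, abs_zero]
      positivity
    · obtain ⟨h0, h1⟩ := hh h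
      refine hlp_mul2_bound (hlp_div_bound (hlp_mul2_bound (hAb ω) (hCν _))
        (hηbar₁lb _) hε') ?_
      rw [abs_of_nonneg h0]; exact h1
  have int_Kff : Integrable (fun ω => (A ω * ((ηbar₁ (Lstar ω))⁻¹ * ν (Lstar ω))) * η (Lstar ω) 1) μ := by
    refine Integrable.mono' ((intAν.abs).const_mul ε'⁻¹)
      ((hA.mul (minv.mul mνL)).mul mη1).aestronglyMeasurable ?_
    filter_upwards [hη1A] with ω hh
    rcases hA01 ω with h|h
    · simp only [Real.norm_eq_abs, h, zero_mul, abs_zero, mul_zero]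
      positivity
    · obtain ⟨h0, h1⟩ := hh h
      rw [Real.norm_eq_abs, h]
      simp only [one_mul]
      calc |(ηbar₁ (Lstar ω))⁻¹ * ν (Lstar ω) * η (Lstar ω) 1|
          ≤ (ε'⁻¹ * |ν (Lstar ω)|) * 1 :=
            hlp_mul2_bound (hlp_mul2_bound (hinvb ω) le_rfl)
              (by rw [abs_of_nonneg h0]; exact h1)
        _ = ε'⁻¹ * |ν (Lstar ω)| := mul_one _
  -- T2 decomposition
  have hT2 : (∫ ω, (R ω * g (L ω) / ηbar₁ (Lstar ω)) * (Y ω - μbar₀ (Lstar ω) (L ω)) * (A ω - (1 - A ω) * (ubar (Lstar ω) (L ω) / (1 - ubar (Lstar ω) (L ω)))) ∂μ)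
      = (∫ ω, A ω * (R ω * ((ηbar₁ (Lstar ω))⁻¹ * (g (L ω) * (Y ω - μbar₀ (Lstar ω) (L ω))))) ∂μ) - ∫ ω, (1 - A ω) * (R ω * ((ηbar₁ (Lstar ω))⁻¹ * (g (L ω) * ((ubar (Lstar ω) (L ω) / (1 - ubar (Lstar ω) (L ω))) * (Y ω - μbar₀ (Lstar ω) (L ω)))))) ∂μ := by
    rw [← integral_sub int_T2a int_T2b]
    exact integral_congr_ae (ae_of_all _ fun ω => by ring)
  have hT2a : (∫ ω, A ω * (R ω * ((ηbar₁ (Lstar ω))⁻¹ * (g (L ω) * (Y ω - μbar₀ (Lstar ω) (L ω))))) ∂μ)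
      = (∫ ω, A ω * (R ω * ((ηbar₁ (Lstar ω))⁻¹ * (g (L ω) * (Y ω - μ₀ (Lstar ω) (L ω))))) ∂μ) + ∫ ω, A ω * (R ω * ((ηbar₁ (Lstar ω))⁻¹ * (g (L ω) * (μ₀ (Lstar ω) (L ω) - μbar₀ (Lstar ω) (L ω))))) ∂μ := by
    rw [← integral_add int_P1 int_P2]
    exact integral_congr_ae (ae_of_all _ fun ω => by ring)
  -- P1 = KR via ν
  have intX1c : Integrable (fun ω => g (L ω) * (Y ω - μ₀ (Lstar ω) (L ω))) (μ[|{ω | A ω = 1 ∧ R ω = 1}]) :=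
    hlp_integrable_cond (hlp_integrable_bdd_mul mgL.aestronglyMeasurable 1 hgb intYμ0) hS1ne
  have intfX1c : Integrable (fun ω => (ηbar₁ (Lstar ω))⁻¹ * (g (L ω) * (Y ω - μ₀ (Lstar ω) (L ω)))) (μ[|{ω | A ω = 1 ∧ R ω = 1}]) := by
    refine hlp_integrable_cond (((hlp_integrable_bdd_mul
      (minv.mul mgL).aestronglyMeasurable (ε'⁻¹ * 1)
      (fun ω => hlp_mul2_bound (hinvb ω) (hgb ω)) intYμ0)).congr
      (ae_of_all _ fun ω => by simp only [Pi.mul_apply]; ring)) hS1ne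
  have hP1 : (∫ ω, A ω * (R ω * ((ηbar₁ (Lstar ω))⁻¹ * (g (L ω) * (Y ω - μ₀ (Lstar ω) (L ω))))) ∂μ) = ∫ ω, (A ω * ((ηbar₁ (Lstar ω))⁻¹ * ν (Lstar ω))) * R ω ∂μ := by
    calc (∫ ω, A ω * (R ω * ((ηbar₁ (Lstar ω))⁻¹ * (g (L ω) * (Y ω - μ₀ (Lstar ω) (L ω))))) ∂μ)
        = ∫ ω, Set.indicator {ω | A ω = 1 ∧ R ω = 1} (fun ω => (ηbar₁ (Lstar ω))⁻¹ * (g (L ω) * (Y ω - μ₀ (Lstar ω) (L ω)))) ω ∂μ :=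
          integral_congr_ae (ae_of_all _ fun ω => hind1 (fun ω => (ηbar₁ (Lstar ω))⁻¹ * (g (L ω) * (Y ω - μ₀ (Lstar ω) (L ω)))) ω)
      _ = (μ {ω | A ω = 1 ∧ R ω = 1}).toReal * ∫ ω, (ηbar₁ (Lstar ω))⁻¹ * (g (L ω) * (Y ω - μ₀ (Lstar ω) (L ω))) ∂μ[|{ω | A ω = 1 ∧ R ω = 1}] :=
          hlp_integral_indicator_cond hS1m hS1ne _
      _ = (μ {ω | A ω = 1 ∧ R ω = 1}).toReal * ∫ ω, (ηbar₁ (Lstar ω))⁻¹ * ν (Lstar ω) ∂μ[|{ω | A ω = 1 ∧ R ω = 1}] :=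
          congrArg _ (hlp_integral_mul_condexp hm0 (μ[|{ω | A ω = 1 ∧ R ω = 1}]) hinvm0 intX1c intfX1c hνver)
      _ = ∫ ω, Set.indicator {ω | A ω = 1 ∧ R ω = 1} (fun ω => (ηbar₁ (Lstar ω))⁻¹ * ν (Lstar ω)) ω ∂μ :=
          (hlp_integral_indicator_cond hS1m hS1ne _).symm
      _ = ∫ ω, A ω * (R ω * ((ηbar₁ (Lstar ω))⁻¹ * ν (Lstar ω))) ∂μ :=
          integral_congr_ae (ae_of_all _ fun ω => (hind1 (fun ω => (ηbar₁ (Lstar ω))⁻¹ * ν (Lstar ω)) ω).symm)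
      _ = ∫ ω, (A ω * ((ηbar₁ (Lstar ω))⁻¹ * ν (Lstar ω))) * R ω ∂μ :=
          integral_congr_ae (ae_of_all _ fun ω => by ring)
  have hKR : (∫ ω, (A ω * ((ηbar₁ (Lstar ω))⁻¹ * ν (Lstar ω))) * R ω ∂μ) = ∫ ω, (A ω * ((ηbar₁ (Lstar ω))⁻¹ * ν (Lstar ω))) * η (Lstar ω) 1 ∂μ := by
    refine (hlp_integral_mul_condexp hm1 μ hf2m intR int_KR hηver).trans
      (integral_congr_ae (ae_of_all _ fun ω => ?_))
    rcases hA01 ω with h|h <;> simp only [h] <;> ring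
  -- T2b decomposition, vanishing part
  have hT2b : (∫ ω, (1 - A ω) * (R ω * ((ηbar₁ (Lstar ω))⁻¹ * (g (L ω) * ((ubar (Lstar ω) (L ω) / (1 - ubar (Lstar ω) (L ω))) * (Y ω - μbar₀ (Lstar ω) (L ω)))))) ∂μ)
      = (∫ ω, (1 - A ω) * (R ω * ((ηbar₁ (Lstar ω))⁻¹ * (g (L ω) * ((ubar (Lstar ω) (L ω) / (1 - ubar (Lstar ω) (L ω))) * (Y ω - μ₀ (Lstar ω) (L ω)))))) ∂μ) + ∫ ω, (1 - A ω) * (R ω * ((ηbar₁ (Lstar ω))⁻¹ * (g (L ω) * ((ubar (Lstar ω) (L ω) / (1 - ubar (Lstar ω) (L ω))) * (μ₀ (Lstar ω) (L ω) - μbar₀ (Lstar ω) (L ω)))))) ∂μ := by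
    rw [← integral_add int_P0 int_P3]
    exact integral_congr_ae (ae_of_all _ fun ω => by ring)
  have intYc : Integrable Y (μ[|{ω | A ω = 0 ∧ R ω = 1}]) := hlp_integrable_cond intY hS0ne
  have intBYc : Integrable (fun ω => ((ηbar₁ (Lstar ω))⁻¹ * (g (L ω) * (ubar (Lstar ω) (L ω) / (1 - ubar (Lstar ω) (L ω))))) * Y ω) (μ[|{ω | A ω = 0 ∧ R ω = 1}]) :=
    hlp_integrable_cond (hlp_integrable_bdd_mul
      (minv.mul (mgL.mul mW)).aestronglyMeasurable (ε'⁻¹ * (1 * ((1 - δ') * δ'⁻¹)))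
      (fun ω => hlp_mul2_bound (hinvb ω) (hlp_mul2_bound (hgb ω) (hWb ω))) intY) hS0ne
  have intBμc : Integrable (fun ω => ((ηbar₁ (Lstar ω))⁻¹ * (g (L ω) * (ubar (Lstar ω) (L ω) / (1 - ubar (Lstar ω) (L ω))))) * μ₀ (Lstar ω) (L ω)) (μ[|{ω | A ω = 0 ∧ R ω = 1}]) :=
    hlp_integrable_cond (hlp_integrable_bdd_mul
      (minv.mul (mgL.mul mW)).aestronglyMeasurable (ε'⁻¹ * (1 * ((1 - δ') * δ'⁻¹)))
      (fun ω => hlp_mul2_bound (hinvb ω) (hlp_mul2_bound (hgb ω) (hWb ω))) intμ0) hS0ne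
  have hP0 : (∫ ω, (1 - A ω) * (R ω * ((ηbar₁ (Lstar ω))⁻¹ * (g (L ω) * ((ubar (Lstar ω) (L ω) / (1 - ubar (Lstar ω) (L ω))) * (Y ω - μ₀ (Lstar ω) (L ω)))))) ∂μ) = 0 := by
    calc (∫ ω, (1 - A ω) * (R ω * ((ηbar₁ (Lstar ω))⁻¹ * (g (L ω) * ((ubar (Lstar ω) (L ω) / (1 - ubar (Lstar ω) (L ω))) * (Y ω - μ₀ (Lstar ω) (L ω)))))) ∂μ)
        = ∫ ω, Set.indicator {ω | A ω = 0 ∧ R ω = 1} (fun ω => (ηbar₁ (Lstar ω))⁻¹ * (g (L ω) * ((ubar (Lstar ω) (L ω) / (1 - ubar (Lstar ω) (L ω))) * (Y ω - μ₀ (Lstar ω) (L ω))))) ω ∂μ :=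
          integral_congr_ae (ae_of_all _ fun ω => hind0 (fun ω => (ηbar₁ (Lstar ω))⁻¹ * (g (L ω) * ((ubar (Lstar ω) (L ω) / (1 - ubar (Lstar ω) (L ω))) * (Y ω - μ₀ (Lstar ω) (L ω))))) ω)
      _ = (μ {ω | A ω = 0 ∧ R ω = 1}).toReal * ∫ ω, (ηbar₁ (Lstar ω))⁻¹ * (g (L ω) * ((ubar (Lstar ω) (L ω) / (1 - ubar (Lstar ω) (L ω))) * (Y ω - μ₀ (Lstar ω) (L ω)))) ∂μ[|{ω | A ω = 0 ∧ R ω = 1}] :=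
          hlp_integral_indicator_cond hS0m hS0ne _
      _ = (μ {ω | A ω = 0 ∧ R ω = 1}).toReal * 0 := by
          refine congrArg _ ?_
          have e1 : ∫ ω, ((ηbar₁ (Lstar ω))⁻¹ * (g (L ω) * (ubar (Lstar ω) (L ω) / (1 - ubar (Lstar ω) (L ω))))) * Y ω ∂μ[|{ω | A ω = 0 ∧ R ω = 1}]
              = ∫ ω, ((ηbar₁ (Lstar ω))⁻¹ * (g (L ω) * (ubar (Lstar ω) (L ω) / (1 - ubar (Lstar ω) (L ω))))) * μ₀ (Lstar ω) (L ω) ∂μ[|{ω | A ω = 0 ∧ R ω = 1}] :=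
            hlp_integral_mul_condexp hm2 (μ[|{ω | A ω = 0 ∧ R ω = 1}]) hBm intYc intBYc hμ₀ver
          have e2 : (∫ ω, (ηbar₁ (Lstar ω))⁻¹ * (g (L ω) * ((ubar (Lstar ω) (L ω) / (1 - ubar (Lstar ω) (L ω))) * (Y ω - μ₀ (Lstar ω) (L ω)))) ∂μ[|{ω | A ω = 0 ∧ R ω = 1}])
              = (∫ ω, ((ηbar₁ (Lstar ω))⁻¹ * (g (L ω) * (ubar (Lstar ω) (L ω) / (1 - ubar (Lstar ω) (L ω))))) * Y ω ∂μ[|{ω | A ω = 0 ∧ R ω = 1}])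
                - ∫ ω, ((ηbar₁ (Lstar ω))⁻¹ * (g (L ω) * (ubar (Lstar ω) (L ω) / (1 - ubar (Lstar ω) (L ω))))) * μ₀ (Lstar ω) (L ω) ∂μ[|{ω | A ω = 0 ∧ R ω = 1}] := by
            rw [← integral_sub intBYc intBμc]
            exact integral_congr_ae (ae_of_all _ fun ω => by ring)
          rw [e2, e1, sub_self]
      _ = 0 := mul_zero _
  -- the u-step
  have intG_μ : Integrable (fun ω => (ηbar₁ (Lstar ω))⁻¹ * g (L ω) * (μ₀ (Lstar ω) (L ω) - μbar₀ (Lstar ω) (L ω)) * (1 - ubar (Lstar ω) (L ω))⁻¹) μ := by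
    refine (hlp_integrable_bdd_mul (((minv.mul mgL)).mul miu).aestronglyMeasurable
      ((ε'⁻¹ * 1) * δ'⁻¹)
      (fun ω => hlp_mul2_bound (hlp_mul2_bound (hinvb ω) (hgb ω)) (hiub ω))
      intμ0μb).congr (ae_of_all _ fun ω => by simp only [Pi.mul_apply]; ring)
  have intG_R : Integrable (fun ω => (ηbar₁ (Lstar ω))⁻¹ * g (L ω) * (μ₀ (Lstar ω) (L ω) - μbar₀ (Lstar ω) (L ω)) * (1 - ubar (Lstar ω) (L ω))⁻¹) (μ[|{ω | R ω = 1}]) := hlp_integrable_cond intG_μ hSRne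
  have intGA_R : Integrable (fun ω => ((ηbar₁ (Lstar ω))⁻¹ * g (L ω) * (μ₀ (Lstar ω) (L ω) - μbar₀ (Lstar ω) (L ω)) * (1 - ubar (Lstar ω) (L ω))⁻¹) * A ω) (μ[|{ω | R ω = 1}]) :=
    (hlp_integrable_bdd_mul hA.aestronglyMeasurable 1 hAb intG_R).congr
      (ae_of_all _ fun ω => by ring)
  have intGub_R : Integrable (fun ω => ((ηbar₁ (Lstar ω))⁻¹ * g (L ω) * (μ₀ (Lstar ω) (L ω) - μbar₀ (Lstar ω) (L ω)) * (1 - ubar (Lstar ω) (L ω))⁻¹) * ubar (Lstar ω) (L ω)) (μ[|{ω | R ω = 1}]) := by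
    refine (hlp_integrable_bdd_mul mub.aestronglyMeasurable 1 (fun ω => ?_)
      intG_R).congr (ae_of_all _ fun ω => by ring)
    rw [abs_of_pos (hubpos _ _)]
    have := (hubarbd (Lstar ω) (L ω)).2
    linarith
  have intGu_R : Integrable (fun ω => ((ηbar₁ (Lstar ω))⁻¹ * g (L ω) * (μ₀ (Lstar ω) (L ω) - μbar₀ (Lstar ω) (L ω)) * (1 - ubar (Lstar ω) (L ω))⁻¹) * u (Lstar ω) (L ω)) (μ[|{ω | R ω = 1}]) := by
    refine Integrable.mono' intG_R.abs
      (((((minv.mul mgL)).mul (mμ0.sub mμb)).mul miu).mul muL).aestronglyMeasurable ?_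
    filter_upwards [hubd] with ω h
    rw [Real.norm_eq_abs, abs_mul]
    have h1 : |u (Lstar ω) (L ω)| ≤ 1 := by
      rw [abs_le]; constructor <;> nlinarith [h.1, h.2]
    calc |(ηbar₁ (Lstar ω))⁻¹ * g (L ω) * (μ₀ (Lstar ω) (L ω) - μbar₀ (Lstar ω) (L ω)) * (1 - ubar (Lstar ω) (L ω))⁻¹| * |u (Lstar ω) (L ω)| ≤ |(ηbar₁ (Lstar ω))⁻¹ * g (L ω) * (μ₀ (Lstar ω) (L ω) - μbar₀ (Lstar ω) (L ω)) * (1 - ubar (Lstar ω) (L ω))⁻¹| * 1 :=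
          mul_le_mul_of_nonneg_left h1 (abs_nonneg _)
      _ = |(ηbar₁ (Lstar ω))⁻¹ * g (L ω) * (μ₀ (Lstar ω) (L ω) - μbar₀ (Lstar ω) (L ω)) * (1 - ubar (Lstar ω) (L ω))⁻¹| := mul_one _
  have intA_R : Integrable A (μ[|{ω | R ω = 1}]) :=
    hlp_integrable_cond (hlp_integrable_of_bound hA.aestronglyMeasurable 1
      (ae_of_all _ hAb)) hSRne
  have hPu : (∫ ω, A ω * (R ω * ((ηbar₁ (Lstar ω))⁻¹ * (g (L ω) * (μ₀ (Lstar ω) (L ω) - μbar₀ (Lstar ω) (L ω))))) ∂μ) - (∫ ω, (1 - A ω) * (R ω * ((ηbar₁ (Lstar ω))⁻¹ * (g (L ω) * ((ubar (Lstar ω) (L ω) / (1 - ubar (Lstar ω) (L ω))) * (μ₀ (Lstar ω) (L ω) - μbar₀ (Lstar ω) (L ω)))))) ∂μ) = ∫ ω, (R ω * g (L ω) / ηbar₁ (Lstar ω)) * (μ₀ (Lstar ω) (L ω) - μbar₀ (Lstar ω) (L ω)) * ((u (Lstar ω) (L ω) - ubar (Lstar ω) (L ω)) / (1 - ubar (Lstar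 ω) (L ω))) ∂μ := by
    have h1 : (∫ ω, A ω * (R ω * ((ηbar₁ (Lstar ω))⁻¹ * (g (L ω) * (μ₀ (Lstar ω) (L ω) - μbar₀ (Lstar ω) (L ω))))) ∂μ) - (∫ ω, (1 - A ω) * (R ω * ((ηbar₁ (Lstar ω))⁻¹ * (g (L ω) * ((ubar (Lstar ω) (L ω) / (1 - ubar (Lstar ω) (L ω))) * (μ₀ (Lstar ω) (L ω) - μbar₀ (Lstar ω) (L ω)))))) ∂μ)
        = ∫ ω, R ω * ((A ω - ubar (Lstar ω) (L ω)) * ((ηbar₁ (Lstar ω))⁻¹ * g (L ω) * (μ₀ (Lstar ω) (L ω) - μbar₀ (Lstar ω) (L ω)) * (1 - ubar (Lstar ω) (L ω))⁻¹)) ∂μ := by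
      rw [← integral_sub int_P2 int_P3]
      refine integral_congr_ae (ae_of_all _ fun ω => ?_)
      have hne : (1 - ubar (Lstar ω) (L ω)) ≠ 0 := (hub1 _ _).ne'
      have hiu1 : (1 - ubar (Lstar ω) (L ω)) * (1 - ubar (Lstar ω) (L ω))⁻¹ = 1 := mul_inv_cancel₀ hne
      linear_combination (-(A ω * R ω * (ηbar₁ (Lstar ω))⁻¹ * g (L ω) * (μ₀ (Lstar ω) (L ω) - μbar₀ (Lstar ω) (L ω)))) * hiu1
    rw [h1]
    calc (∫ ω, R ω * ((A ω - ubar (Lstar ω) (L ω)) * ((ηbar₁ (Lstar ω))⁻¹ * g (L ω) * (μ₀ (Lstar ω) (L ω) - μbar₀ (Lstar ω) (L ω)) * (1 - ubar (Lstar ω) (L ω))⁻¹)) ∂μ)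
        = ∫ ω, Set.indicator {ω | R ω = 1} (fun ω => (A ω - ubar (Lstar ω) (L ω)) * ((ηbar₁ (Lstar ω))⁻¹ * g (L ω) * (μ₀ (Lstar ω) (L ω) - μbar₀ (Lstar ω) (L ω)) * (1 - ubar (Lstar ω) (L ω))⁻¹)) ω ∂μ :=
          integral_congr_ae (ae_of_all _ fun ω => hindR (fun ω => (A ω - ubar (Lstar ω) (L ω)) * ((ηbar₁ (Lstar ω))⁻¹ * g (L ω) * (μ₀ (Lstar ω) (L ω) - μbar₀ (Lstar ω) (L ω)) * (1 - ubar (Lstar ω) (L ω))⁻¹)) ω)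
      _ = (μ {ω | R ω = 1}).toReal * ∫ ω, (A ω - ubar (Lstar ω) (L ω)) * ((ηbar₁ (Lstar ω))⁻¹ * g (L ω) * (μ₀ (Lstar ω) (L ω) - μbar₀ (Lstar ω) (L ω)) * (1 - ubar (Lstar ω) (L ω))⁻¹) ∂μ[|{ω | R ω = 1}] :=
          hlp_integral_indicator_cond hSRm hSRne _
      _ = (μ {ω | R ω = 1}).toReal * ∫ ω, (u (Lstar ω) (L ω) - ubar (Lstar ω) (L ω)) * ((ηbar₁ (Lstar ω))⁻¹ * g (L ω) * (μ₀ (Lstar ω) (L ω) - μbar₀ (Lstar ω) (L ω)) * (1 - ubar (Lstar ω) (L ω))⁻¹) ∂μ[|{ω | R ω = 1}] := by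
          refine congrArg _ ?_
          have e2 : (∫ ω, (A ω - ubar (Lstar ω) (L ω)) * ((ηbar₁ (Lstar ω))⁻¹ * g (L ω) * (μ₀ (Lstar ω) (L ω) - μbar₀ (Lstar ω) (L ω)) * (1 - ubar (Lstar ω) (L ω))⁻¹) ∂μ[|{ω | R ω = 1}])
              = (∫ ω, ((ηbar₁ (Lstar ω))⁻¹ * g (L ω) * (μ₀ (Lstar ω) (L ω) - μbar₀ (Lstar ω) (L ω)) * (1 - ubar (Lstar ω) (L ω))⁻¹) * A ω ∂μ[|{ω | R ω = 1}]) - ∫ ω, ((ηbar₁ (Lstar ω))⁻¹ * g (L ω) * (μ₀ (Lstar ω) (L ω) - μbar₀ (Lstar ω) (L ω)) * (1 - ubar (Lstar ω) (L ω))⁻¹) * ubar (Lstar ω) (L ω) ∂μ[|{ω | R ω = 1}] := by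
            rw [← integral_sub intGA_R intGub_R]
            exact integral_congr_ae (ae_of_all _ fun ω => by ring)
          have e3 : (∫ ω, (u (Lstar ω) (L ω) - ubar (Lstar ω) (L ω)) * ((ηbar₁ (Lstar ω))⁻¹ * g (L ω) * (μ₀ (Lstar ω) (L ω) - μbar₀ (Lstar ω) (L ω)) * (1 - ubar (Lstar ω) (L ω))⁻¹) ∂μ[|{ω | R ω = 1}])
              = (∫ ω, ((ηbar₁ (Lstar ω))⁻¹ * g (L ω) * (μ₀ (Lstar ω) (L ω) - μbar₀ (Lstar ω) (L ω)) * (1 - ubar (Lstar ω) (L ω))⁻¹) * u (Lstar ω) (L ω) ∂μ[|{ω | R ω = 1}]) - ∫ ω, ((ηbar₁ (Lstar ω))⁻¹ * g (L ω) * (μ₀ (Lstar ω) (L ω) - μbar₀ (Lstar ω) (L ω)) * (1 - ubar (Lstar ω) (L ω))⁻¹) * ubar (Lstar ω) (L ω) ∂μ[|{ω | R ω = 1}] := by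
            rw [← integral_sub intGu_R intGub_R]
            exact integral_congr_ae (ae_of_all _ fun ω => by ring)
          have e4 : (∫ ω, ((ηbar₁ (Lstar ω))⁻¹ * g (L ω) * (μ₀ (Lstar ω) (L ω) - μbar₀ (Lstar ω) (L ω)) * (1 - ubar (Lstar ω) (L ω))⁻¹) * A ω ∂μ[|{ω | R ω = 1}]) = ∫ ω, ((ηbar₁ (Lstar ω))⁻¹ * g (L ω) * (μ₀ (Lstar ω) (L ω) - μbar₀ (Lstar ω) (L ω)) * (1 - ubar (Lstar ω) (L ω))⁻¹) * u (Lstar ω) (L ω) ∂μ[|{ω | R ω = 1}] :=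
            hlp_integral_mul_condexp hm2 (μ[|{ω | R ω = 1}]) hGm intA_R intGA_R huver
          rw [e2, e3, e4]
      _ = ∫ ω, Set.indicator {ω | R ω = 1} (fun ω => (u (Lstar ω) (L ω) - ubar (Lstar ω) (L ω)) * ((ηbar₁ (Lstar ω))⁻¹ * g (L ω) * (μ₀ (Lstar ω) (L ω) - μbar₀ (Lstar ω) (L ω)) * (1 - ubar (Lstar ω) (L ω))⁻¹)) ω ∂μ :=
          (hlp_integral_indicator_cond hSRm hSRne _).symm
      _ = ∫ ω, R ω * ((u (Lstar ω) (L ω) - ubar (Lstar ω) (L ω)) * ((ηbar₁ (Lstar ω))⁻¹ * g (L ω) * (μ₀ (Lstar ω) (L ω) - μbar₀ (Lstar ω) (L ω)) * (1 - ubar (Lstar ω) (L ω))⁻¹)) ∂μ :=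
          integral_congr_ae (ae_of_all _ fun ω => (hindR (fun ω => (u (Lstar ω) (L ω) - ubar (Lstar ω) (L ω)) * ((ηbar₁ (Lstar ω))⁻¹ * g (L ω) * (μ₀ (Lstar ω) (L ω) - μbar₀ (Lstar ω) (L ω)) * (1 - ubar (Lstar ω) (L ω))⁻¹)) ω).symm)
      _ = ∫ ω, (R ω * g (L ω) / ηbar₁ (Lstar ω)) * (μ₀ (Lstar ω) (L ω) - μbar₀ (Lstar ω) (L ω)) * ((u (Lstar ω) (L ω) - ubar (Lstar ω) (L ω)) / (1 - ubar (Lstar ω) (L ω))) ∂μ :=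
          integral_congr_ae (ae_of_all _ fun ω => by ring)
  -- the s1 identity
  have hS1eq : (∫ ω, A ω * (1 - η (Lstar ω) 1 / ηbar₁ (Lstar ω)) * (νbar (Lstar ω) - ν (Lstar ω)) ∂μ)
      = ((∫ ω, A ω * νbar (Lstar ω) ∂μ) - ∫ ω, (A ω * νbar (Lstar ω) / ηbar₁ (Lstar ω)) * η (Lstar ω) 1 ∂μ)
        - ((∫ ω, A ω * ν (Lstar ω) ∂μ) - ∫ ω, (A ω * ((ηbar₁ (Lstar ω))⁻¹ * ν (Lstar ω))) * η (Lstar ω) 1 ∂μ) := by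
    have int_d1 : Integrable (fun ω => A ω * νbar (Lstar ω) - (A ω * νbar (Lstar ω) / ηbar₁ (Lstar ω)) * η (Lstar ω) 1) μ := by
      have := int_a.sub int_J3; exact this
    have int_d2 : Integrable (fun ω => A ω * ν (Lstar ω) - (A ω * ((ηbar₁ (Lstar ω))⁻¹ * ν (Lstar ω))) * η (Lstar ω) 1) μ := by
      have := intAν.sub int_Kff; exact this
    rw [← integral_sub int_a int_J3, ← integral_sub intAν int_Kff,
      ← integral_sub int_d1 int_d2]
    exact integral_congr_ae (ae_of_all _ fun ω => by ring)
  -- final assembly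
  rw [hsplit]
  linarith
end

section
/- (Projection identity for the efficient influence function of α.) Under the setup and Assumptions A4 and A5, let ε₁ : ℝ^p × ℝ → [0,1] be measurable with ε₁(L*, Y) a version of E[E | σ(L*, Y)] under μ(·|{A = 1, R = 1}), and ω₁ : ℝ^p → [0,1] measurable with ω₁(L*) a version of E[E | σ(L*)] under μ(·|{A = 1, R = 1}). Then, μ-almost surely, E[A·R·E/η₁(L*) | σ(L*, A, Y)] = A·ε₁(L*, Y) and E[A·R·E/η₁(L*) | σ(L*, A)] = A·ω₁(L*); consequently the projection of A·R·E/η₁(L*) onto the space {f ∈ L²(μ) : f is σ(L*, A, Y)-measurable and E[f | σ(L*, A)] = 0} equals A·(ε₁(L*, Y) − ω₁(L*)). -/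
open MeasureTheory ProbabilityTheory Filter
open scoped ENNReal ProbabilityTheory

set_option linter.unusedVariables false

abbrev mcomap {Ω γ : Type*} [MeasurableSpace γ] (G : Ω → γ) : MeasurableSpace Ω :=
  MeasurableSpace.comap G inferInstance

section MarK

variable {Ω : Type*} [mΩ : MeasurableSpace Ω] [StandardBorelSpace Ω] [Nonempty Ω]

omit [StandardBorelSpace Ω] [Nonempty Ω] in
lemma intBdd {μ : Measure Ω} [IsFiniteMeasure μ] {f : Ω → ℝ}
    (hf : AEStronglyMeasurable f μ) {c : ℝ} (h : ∀ᵐ ω ∂μ, |f ω| ≤ c) : Integrable f μ :=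
  memLp_one_iff_integrable.mp (MemLp.of_bound hf c (by simpa [Real.norm_eq_abs] using h))

lemma marK (μ : Measure Ω) [IsProbabilityMeasure μ]
    {γG γZ : Type*} [MeasurableSpace γG] [MeasurableSpace γZ]
    {G : Ω → γG} {Z : Ω → γZ} {R : Ω → ℝ}
    (hG : Measurable G) (hZ : Measurable Z) (hR : Measurable R)
    (hR01 : ∀ ω, R ω = 0 ∨ R ω = 1)
    (hm : mcomap G ≤ mΩ)
    (hCI : CondIndepFun (mcomap G) hm R Z μ)
    {η : γG → ℝ} (hη : Measurable η)
    (hηver : (fun ω => η (G ω)) =ᵐ[μ] μ[R|mcomap G])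
    (hηnn : 0 ≤ᵐ[μ] fun ω => η (G ω))
    (F : γG × γZ → ℝ) (hF : Measurable F) :
    ∫ ω, R ω * F (G ω, Z ω) ∂μ = ∫ ω, η (G ω) * F (G ω, Z ω) ∂μ := by
  have hR0 : ∀ ω, 0 ≤ R ω := fun ω => by rcases hR01 ω with h | h <;> simp [h]
  have hR1 : ∀ ω, |R ω| ≤ 1 := fun ω => by rcases hR01 ω with h | h <;> simp [h]
  have hRint : Integrable R μ := intBdd hR.aestronglyMeasurable (Eventually.of_forall hR1)
  have hηGm : Measurable[mcomap G] fun ω => η (G ω) :=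
    hη.comp (measurable_iff_comap_le.mpr le_rfl)
  have hηG_int : Integrable (fun ω => η (G ω)) μ := integrable_condExp.congr hηver.symm
  have hηle1 : ∀ᵐ ω ∂μ, |η (G ω)| ≤ 1 := by
    have h1 : μ[R|mcomap G] ≤ᵐ[μ] μ[fun _ => (1:ℝ)|mcomap G] :=
      condExp_mono hRint (integrable_const 1)
        (Eventually.of_forall fun ω => (abs_le.mp (hR1 ω)).2)
    rw [condExp_const hm] at h1
    filter_upwards [hηver, h1, hηnn] with ω h2 h3 h4
    rw [abs_le]
    refine ⟨le_trans (by norm_num) h4, ?_⟩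
    rw [h2]; exact h3
  -- Step A: key set identity
  have key : ∀ s' t, MeasurableSet s' → MeasurableSet t →
      ∫ ω in G ⁻¹' s' ∩ Z ⁻¹' t, R ω ∂μ = ∫ ω in G ⁻¹' s' ∩ Z ⁻¹' t, η (G ω) ∂μ := by
    intro s' t hs' ht
    have hsm : MeasurableSet[mcomap G] (G ⁻¹' s') := ⟨s', hs', rfl⟩
    have hsΩ : MeasurableSet (G ⁻¹' s') := hm _ hsm
    have htΩ : MeasurableSet (Z ⁻¹' t) := hZ ht
    have hprod := (condIndepFun_iff_condExp_inter_preimage_eq_mul hR hZ).mp hCI {1} t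
      (measurableSet_singleton 1) ht
    have hL : ∫ ω in G ⁻¹' s' ∩ Z ⁻¹' t, R ω ∂μ
        = ∫ ω in G ⁻¹' s', (R ⁻¹' {1} ∩ Z ⁻¹' t).indicator (fun _ => (1:ℝ)) ω ∂μ := by
      rw [← integral_indicator (hsΩ.inter htΩ), ← integral_indicator hsΩ]
      refine integral_congr_ae (Eventually.of_forall fun ω => ?_)
      by_cases h1 : ω ∈ G ⁻¹' s' <;> by_cases h2 : ω ∈ Z ⁻¹' t <;>
        rcases hR01 ω with h3 | h3 <;>
          simp [Set.indicator_apply, Set.mem_inter_iff, Set.mem_preimage, h1, h2, h3]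
    have hind_int : Integrable ((R ⁻¹' {1} ∩ Z ⁻¹' t).indicator (fun _ => (1:ℝ))) μ :=
      intBdd (c := 1) ((stronglyMeasurable_const.indicator
          ((hR (measurableSet_singleton 1)).inter htΩ)).aestronglyMeasurable)
        (Eventually.of_forall fun ω => by
          by_cases hω : ω ∈ R ⁻¹' {1} ∩ Z ⁻¹' t <;> simp [Set.indicator_apply, hω])
    have hL2 : ∫ ω in G ⁻¹' s', (R ⁻¹' {1} ∩ Z ⁻¹' t).indicator (fun _ => (1:ℝ)) ω ∂μ
        = ∫ ω in G ⁻¹' s', η (G ω) * (μ⟦Z ⁻¹' t | mcomap G⟧) ω ∂μ := by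
      rw [← setIntegral_condExp hm hind_int hsm]
      refine setIntegral_congr_ae hsΩ ?_
      have hRind : μ⟦R ⁻¹' {1} | mcomap G⟧ =ᵐ[μ] μ[R|mcomap G] := by
        refine condExp_congr_ae (Eventually.of_forall fun ω => ?_)
        rcases hR01 ω with h | h <;>
          simp [Set.indicator_apply, Set.mem_preimage, h]
      filter_upwards [hprod, hRind, hηver] with ω h1 h2 h3 _
      rw [h1, h2, ← h3]
    have hind_int2 : Integrable ((Z ⁻¹' t).indicator (fun _ => (1:ℝ))) μ :=
      intBdd (c := 1) ((stronglyMeasurable_const.indicator htΩ).aestronglyMeasurable)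
        (Eventually.of_forall fun ω => by
          by_cases hω : ω ∈ Z ⁻¹' t <;> simp [Set.indicator_apply, hω])
    have hη_mul_int : Integrable (fun ω => η (G ω) * (Z ⁻¹' t).indicator (fun _ => (1:ℝ)) ω) μ :=
      hind_int2.bdd_mul ((hηGm.mono hm le_rfl).aestronglyMeasurable)
        (by simpa [Real.norm_eq_abs] using hηle1)
    have hR2 : ∫ ω in G ⁻¹' s' ∩ Z ⁻¹' t, η (G ω) ∂μ
        = ∫ ω in G ⁻¹' s', η (G ω) * (Z ⁻¹' t).indicator (fun _ => (1:ℝ)) ω ∂μ := by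
      rw [← integral_indicator (hsΩ.inter htΩ), ← integral_indicator hsΩ]
      refine integral_congr_ae (Eventually.of_forall fun ω => ?_)
      by_cases h1 : ω ∈ G ⁻¹' s' <;> by_cases h2 : ω ∈ Z ⁻¹' t <;>
        simp [Set.indicator_apply, Set.mem_inter_iff, Set.mem_preimage, h1, h2]
    have hpull : μ[fun ω => η (G ω) * (Z ⁻¹' t).indicator (fun _ => (1:ℝ)) ω | mcomap G]
        =ᵐ[μ] fun ω => η (G ω) * (μ⟦Z ⁻¹' t | mcomap G⟧) ω := by
      exact condExp_mul_of_stronglyMeasurable_left hηGm.stronglyMeasurable hη_mul_int hind_int2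
    have hR3 : ∫ ω in G ⁻¹' s', η (G ω) * (Z ⁻¹' t).indicator (fun _ => (1:ℝ)) ω ∂μ
        = ∫ ω in G ⁻¹' s', η (G ω) * (μ⟦Z ⁻¹' t | mcomap G⟧) ω ∂μ := by
      rw [← setIntegral_condExp hm hη_mul_int hsm]
      exact setIntegral_congr_ae hsΩ (hpull.mono fun ω h _ => h)
    rw [hL, hL2, hR2, hR3]
  -- Step B: equality of pushforward measures
  have hGZ : Measurable fun ω => (G ω, Z ω) := hG.prodMk hZ
  haveI h1fin : IsFiniteMeasure (μ.withDensity fun ω => ENNReal.ofReal (R ω)) :=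
    isFiniteMeasure_withDensity_ofReal hRint.hasFiniteIntegral
  haveI h2fin : IsFiniteMeasure (μ.withDensity fun ω => ENNReal.ofReal (η (G ω))) :=
    isFiniteMeasure_withDensity_ofReal hηG_int.hasFiniteIntegral
  have hrect : ∀ s' t, MeasurableSet s' → MeasurableSet t →
      ((μ.withDensity fun ω => ENNReal.ofReal (R ω)).map (fun ω => (G ω, Z ω))) (s' ×ˢ t)
        = ((μ.withDensity fun ω => ENNReal.ofReal (η (G ω))).map (fun ω => (G ω, Z ω)))
            (s' ×ˢ t) := by
    intro s' t hs' ht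
    have hst : MeasurableSet (s' ×ˢ t) := hs'.prod ht
    have hpre : (fun ω => (G ω, Z ω)) ⁻¹' (s' ×ˢ t) = G ⁻¹' s' ∩ Z ⁻¹' t :=
      Set.mk_preimage_prod _ _
    have hsetm : MeasurableSet (G ⁻¹' s' ∩ Z ⁻¹' t) := (hG hs').inter (hZ ht)
    rw [Measure.map_apply hGZ hst, Measure.map_apply hGZ hst, hpre,
      withDensity_apply _ hsetm, withDensity_apply _ hsetm,
      ← ofReal_integral_eq_lintegral_ofReal hRint.restrict (Eventually.of_forall hR0),
      ← ofReal_integral_eq_lintegral_ofReal hηG_int.restrict (ae_restrict_of_ae hηnn),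
      key s' t hs' ht]
  have hmeas_eq : ((μ.withDensity fun ω => ENNReal.ofReal (R ω)).map (fun ω => (G ω, Z ω)))
      = ((μ.withDensity fun ω => ENNReal.ofReal (η (G ω))).map (fun ω => (G ω, Z ω))) := by
    refine ext_of_generate_finite _ generateFrom_prod.symm isPiSystem_prod ?_ ?_
    · rintro u ⟨s', hs', t, ht, rfl⟩
      exact hrect s' t hs' ht
    · have := hrect Set.univ Set.univ MeasurableSet.univ MeasurableSet.univ
      simpa [Set.univ_prod_univ] using this
  -- Step C: transfer of integrals
  have htrans : ∀ (d : Ω → ℝ), Measurable d → (0 ≤ᵐ[μ] d) →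
      ∫ x, F x ∂((μ.withDensity fun ω => ENNReal.ofReal (d ω)).map (fun ω => (G ω, Z ω)))
        = ∫ ω, d ω * F (G ω, Z ω) ∂μ := by
    intro d hd hdnn
    rw [integral_map hGZ.aemeasurable hF.aestronglyMeasurable]
    have : (fun ω => ENNReal.ofReal (d ω)) = fun ω => ((d ω).toNNReal : ℝ≥0∞) := rfl
    rw [this, integral_withDensity_eq_integral_smul₀
      (hd.real_toNNReal.aemeasurable) (fun ω => F (G ω, Z ω))]
    refine integral_congr_ae ?_
    filter_upwards [hdnn] with ω hω
    simp [NNReal.smul_def, Real.coe_toNNReal _ hω]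
  calc ∫ ω, R ω * F (G ω, Z ω) ∂μ
      = ∫ x, F x ∂((μ.withDensity fun ω => ENNReal.ofReal (R ω)).map
          (fun ω => (G ω, Z ω))) := (htrans R hR (Eventually.of_forall hR0)).symm
    _ = ∫ x, F x ∂((μ.withDensity fun ω => ENNReal.ofReal (η (G ω))).map
          (fun ω => (G ω, Z ω))) := by rw [hmeas_eq]
    _ = ∫ ω, η (G ω) * F (G ω, Z ω) ∂μ := htrans _ (hη.comp hG) hηnn


lemma genClaim (μ : Measure Ω) [IsProbabilityMeasure μ]
    {γ1 γZ β : Type*} [MeasurableSpace γ1] [MeasurableSpace γZ] [MeasurableSpace β]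
    {V : Ω → γ1} {A : Ω → ℝ} {Z : Ω → γZ} {R : Ω → ℝ}
    (hV : Measurable V) (hA : Measurable A) (hZ : Measurable Z) (hR : Measurable R)
    (hA01 : ∀ ω, A ω = 0 ∨ A ω = 1) (hR01 : ∀ ω, R ω = 0 ∨ R ω = 1)
    (hmG : mcomap (fun ω => (V ω, A ω)) ≤ mΩ)
    (hCI : CondIndepFun (mcomap (fun ω => (V ω, A ω))) hmG R Z μ)
    {η : γ1 → ℝ → ℝ} (hη : Measurable (Function.uncurry η))
    (hηver : (fun ω => η (V ω) (A ω)) =ᵐ[μ] μ[R|mcomap (fun ω => (V ω, A ω))])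
    {ε₀ : ℝ} (hε₀ : 0 < ε₀)
    (hηpos : ∀ᵐ ω ∂μ, ε₀ ≤ η (V ω) 0 ∧ ε₀ ≤ η (V ω) 1)
    {Eb : (γ1 × ℝ) × γZ → ℝ} (hEb : Measurable Eb) (hEb01 : ∀ x, Eb x = 0 ∨ Eb x = 1)
    {S : Set Ω} (hSdef : S = {ω | A ω = 1 ∧ R ω = 1}) (hSpos : 0 < μ S)
    {X : Ω → β} (hX : Measurable X)
    {ξ : (γ1 × ℝ) × γZ → β} (hξ : Measurable ξ) (hXξ : ∀ ω, X ω = ξ ((V ω, A ω), Z ω))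
    {ρ : β → γ1} (hρ : Measurable ρ) (hVρ : ∀ ω, V ω = ρ (X ω))
    {τ : β → ℝ} (hτ : Measurable τ) (hτ01 : ∀ b, τ b ∈ Set.Icc (0:ℝ) 1)
    (hτver : (fun ω => τ (X ω)) =ᵐ[μ[|S]]
      (μ[|S])[(fun ω => Eb ((V ω, A ω), Z ω))|mcomap X]) :
    μ[(fun ω => A ω * R ω * Eb ((V ω, A ω), Z ω) / η (V ω) 1)|mcomap (fun ω => (X ω, A ω))]
      =ᵐ[μ] fun ω => A ω * τ (X ω) := by
  have hA1 : ∀ ω, |A ω| ≤ 1 := fun ω => by rcases hA01 ω with h | h <;> simp [h]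
  have hR1 : ∀ ω, |R ω| ≤ 1 := fun ω => by rcases hR01 ω with h | h <;> simp [h]
  have hEb1 : ∀ x, |Eb x| ≤ 1 := fun x => by rcases hEb01 x with h | h <;> simp [h]
  have hτ1 : ∀ b, |τ b| ≤ 1 := fun b => by
    have := hτ01 b; rw [abs_le]; exact ⟨by linarith [this.1], this.2⟩
  have hRint : Integrable R μ := intBdd hR.aestronglyMeasurable (Eventually.of_forall hR1)
  have hG : Measurable fun ω => (V ω, A ω) := hV.prodMk hA
  have hm : mcomap (fun ω => (X ω, A ω)) ≤ mΩ := (hX.prodMk hA).comap_le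
  have hmX : mcomap X ≤ mΩ := hX.comap_le
  -- η basic facts
  have hη1m : Measurable fun v => η v 1 := hη.comp (measurable_id.prodMk measurable_const)
  set tη : γ1 → ℝ := fun v => max (η v 1) ε₀ with htη_def
  have htηm : Measurable tη := hη1m.max measurable_const
  have htηpos : ∀ v, ε₀ ≤ tη v := fun v => le_max_right _ _
  have htηne : ∀ v, tη v ≠ 0 := fun v => ne_of_gt (lt_of_lt_of_le hε₀ (htηpos v))
  have htηae : ∀ᵐ ω ∂μ, tη (V ω) = η (V ω) 1 := by
    filter_upwards [hηpos] with ω h using max_eq_left h.2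
  have hηuncm : Measurable fun ω => η (V ω) (A ω) := hη.comp (hV.prodMk hA)
  have hηG_int : Integrable (fun ω => η (V ω) (A ω)) μ := integrable_condExp.congr hηver.symm
  have hηnn : 0 ≤ᵐ[μ] fun ω => η (V ω) (A ω) := by
    have h0 : 0 ≤ᵐ[μ] μ[R|mcomap (fun ω => (V ω, A ω))] :=
      condExp_nonneg (Eventually.of_forall fun ω => by
        rcases hR01 ω with h | h <;> simp [h])
    filter_upwards [hηver, h0] with ω h1 h2
    rw [h1]; exact h2
  have hηle1 : ∀ᵐ ω ∂μ, |η (V ω) (A ω)| ≤ 1 := by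
    have h1 : μ[R|mcomap (fun ω => (V ω, A ω))]
        ≤ᵐ[μ] μ[fun _ => (1:ℝ)|mcomap (fun ω => (V ω, A ω))] :=
      condExp_mono hRint (integrable_const 1)
        (Eventually.of_forall fun ω => (abs_le.mp (hR1 ω)).2)
    rw [condExp_const hmG] at h1
    filter_upwards [hηver, h1, hηnn] with ω h2 h3 h4
    rw [abs_le]
    refine ⟨le_trans (by norm_num) h4, ?_⟩
    rw [h2]; exact h3
  -- on A = 1, tη (V ω) = η (V ω) (A ω)
  have htηA : ∀ᵐ ω ∂μ, A ω = 1 → η (V ω) (A ω) = tη (V ω) := by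
    filter_upwards [htηae] with ω h hA1'
    rw [hA1', h]
  have htηbd : ∀ᵐ ω ∂μ, A ω = 1 → |tη (V ω)| ≤ 1 := by
    filter_upwards [htηA, hηle1] with ω h1 h2 hA1'
    rw [← h1 hA1']; exact h2
  -- χ: indicator of {1}
  set χ : ℝ → ℝ := ({1} : Set ℝ).indicator (fun _ => (1:ℝ)) with hχ_def
  have hχm : Measurable χ := measurable_const.indicator (measurableSet_singleton 1)
  have hAχ : ∀ ω, A ω = χ (A ω) := fun ω => by
    rcases hA01 ω with h | h <;> simp [hχ_def, Set.indicator_apply, h]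
  have hχ1 : χ 1 = 1 := by simp [hχ_def]
  -- the MAR transfer specialized
  have KM : ∀ F : (γ1 × ℝ) × γZ → ℝ, Measurable F →
      ∫ ω, R ω * F ((V ω, A ω), Z ω) ∂μ = ∫ ω, η (V ω) (A ω) * F ((V ω, A ω), Z ω) ∂μ :=
    fun F hF => marK μ hG hZ hR hR01 hmG hCI hη hηver hηnn F hF
  -- conditional measure facts
  have hSmeas : MeasurableSet S := by
    rw [hSdef]
    exact (hA (measurableSet_singleton 1)).inter (hR (measurableSet_singleton 1))
  haveI hνP : IsProbabilityMeasure (μ[|S]) := cond_isProbabilityMeasure hSpos.ne'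
  have hSind : ∀ (f : Ω → ℝ) ω, S.indicator f ω = (A ω * R ω) * f ω := by
    intro f ω
    by_cases hω : ω ∈ S
    · have h2 : A ω = 1 ∧ R ω = 1 := by rw [hSdef] at hω; exact hω
      simp [Set.indicator_apply, hω, h2.1, h2.2]
    · have h2 : ¬ (A ω = 1 ∧ R ω = 1) := by rw [hSdef] at hω; exact hω
      rcases hA01 ω with h3 | h3
      · simp [Set.indicator_apply, hω, h3]
      · rcases hR01 ω with h4 | h4
        · simp [Set.indicator_apply, hω, h3, h4]
        · exact absurd ⟨h3, h4⟩ h2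
  have hνint : ∀ (f : Ω → ℝ), (∫ ω, f ω ∂(μ[|S]))
      = ((μ S)⁻¹).toReal * ∫ ω, (A ω * R ω) * f ω ∂μ := by
    intro f
    rw [ProbabilityTheory.cond, integral_smul_measure, ← integral_indicator hSmeas]
    rw [integral_congr_ae (Eventually.of_forall fun ω => hSind f ω)]
    rfl
  have hcne : ((μ S)⁻¹).toReal ≠ 0 := by
    refine ENNReal.toReal_ne_zero.mpr ⟨?_, ?_⟩
    · simp [ENNReal.inv_ne_zero]
    · simp [hSpos.ne']
  -- indicator composition on set integrals
  have hind_comp : ∀ (B' : Set β) (f : Ω → ℝ) (ω : Ω),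
      (X ⁻¹' B').indicator f ω = B'.indicator (fun _ => (1:ℝ)) (X ω) * f ω := by
    intro B' f ω
    by_cases hω : X ω ∈ B' <;> simp [Set.indicator_apply, hω]
  -- Step 0: consequence of the version property of τ under the conditional measure
  have step0 : ∀ B' : Set β, MeasurableSet B' →
      ∫ ω, (A ω * R ω) * (B'.indicator (fun _ => (1:ℝ)) (X ω) * Eb ((V ω, A ω), Z ω)) ∂μ
        = ∫ ω, (A ω * R ω) * (B'.indicator (fun _ => (1:ℝ)) (X ω) * τ (X ω)) ∂μ := by
    intro B' hB'
    have hsmem : MeasurableSet[mcomap X] (X ⁻¹' B') := ⟨B', hB', rfl⟩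
    have hsΩ : MeasurableSet (X ⁻¹' B') := hX hB'
    have hEbν_int : Integrable (fun ω => Eb ((V ω, A ω), Z ω)) (μ[|S]) :=
      intBdd (c := 1) ((hEb.comp (hG.prodMk hZ)).aestronglyMeasurable)
        (Eventually.of_forall fun ω => hEb1 _)
    have heq1 : ∫ ω in X ⁻¹' B', Eb ((V ω, A ω), Z ω) ∂(μ[|S])
        = ∫ ω in X ⁻¹' B', τ (X ω) ∂(μ[|S]) := by
      rw [← setIntegral_condExp hmX hEbν_int hsmem]
      exact setIntegral_congr_ae hsΩ (hτver.symm.mono fun ω h _ => h)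
    have hconv : ∀ (f : Ω → ℝ), ∫ ω in X ⁻¹' B', f ω ∂(μ[|S])
        = ((μ S)⁻¹).toReal * ∫ ω, (A ω * R ω)
            * (B'.indicator (fun _ => (1:ℝ)) (X ω) * f ω) ∂μ := by
      intro f
      rw [← integral_indicator hsΩ,
        integral_congr_ae (Eventually.of_forall fun ω => hind_comp B' f ω), hνint]
    rw [hconv, hconv] at heq1
    exact mul_left_cancel₀ hcne heq1
  -- Step 1: weighted identity under μ
  have step1 : ∀ B' : Set β, MeasurableSet B' →
      ∫ ω, B'.indicator (fun _ => (1:ℝ)) (X ω) * (A ω * (tη (V ω) * Eb ((V ω, A ω), Z ω))) ∂μ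
        = ∫ ω, B'.indicator (fun _ => (1:ℝ)) (X ω) * (A ω * (tη (V ω) * τ (X ω))) ∂μ := by
    intro B' hB'
    have hx12 : Measurable fun x : (γ1 × ℝ) × γZ => x.1.2 := measurable_fst.snd
    have hF₁m : Measurable fun x : (γ1 × ℝ) × γZ =>
        B'.indicator (fun _ => (1:ℝ)) (ξ x) * (χ x.1.2 * Eb x) :=
      ((measurable_const.indicator hB').comp hξ).mul ((hχm.comp hx12).mul hEb)
    have hF₂m : Measurable fun x : (γ1 × ℝ) × γZ =>
        B'.indicator (fun _ => (1:ℝ)) (ξ x) * (χ x.1.2 * τ (ξ x)) :=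
      ((measurable_const.indicator hB').comp hξ).mul ((hχm.comp hx12).mul (hτ.comp hξ))
    have hKM₁ := KM _ hF₁m
    have hKM₂ := KM _ hF₂m
    have hL₁ : ∫ ω, (A ω * R ω) * (B'.indicator (fun _ => (1:ℝ)) (X ω) * Eb ((V ω, A ω), Z ω)) ∂μ
        = ∫ ω, R ω * (B'.indicator (fun _ => (1:ℝ)) (ξ ((V ω, A ω), Z ω))
            * (χ (A ω) * Eb ((V ω, A ω), Z ω))) ∂μ := by
      refine integral_congr_ae (Eventually.of_forall fun ω => ?_)
      simp only []
      rw [← hXξ ω, ← hAχ ω]; ring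
    have hL₂ : ∫ ω, (A ω * R ω) * (B'.indicator (fun _ => (1:ℝ)) (X ω) * τ (X ω)) ∂μ
        = ∫ ω, R ω * (B'.indicator (fun _ => (1:ℝ)) (ξ ((V ω, A ω), Z ω))
            * (χ (A ω) * τ (ξ ((V ω, A ω), Z ω)))) ∂μ := by
      refine integral_congr_ae (Eventually.of_forall fun ω => ?_)
      simp only []
      rw [← hXξ ω, ← hAχ ω]; ring
    have hR₁ : ∫ ω, η (V ω) (A ω) * (B'.indicator (fun _ => (1:ℝ)) (ξ ((V ω, A ω), Z ω))
            * (χ (A ω) * Eb ((V ω, A ω), Z ω))) ∂μ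
        = ∫ ω, B'.indicator (fun _ => (1:ℝ)) (X ω)
            * (A ω * (tη (V ω) * Eb ((V ω, A ω), Z ω))) ∂μ := by
      refine integral_congr_ae ?_
      filter_upwards [htηA] with ω h
      rw [← hXξ ω]
      rcases hA01 ω with h0 | h0
      · simp [h0, hχ_def, Set.indicator_apply]
      · rw [h h0, h0, hχ1]; ring
    have hR₂ : ∫ ω, η (V ω) (A ω) * (B'.indicator (fun _ => (1:ℝ)) (ξ ((V ω, A ω), Z ω))
            * (χ (A ω) * τ (ξ ((V ω, A ω), Z ω)))) ∂μ
        = ∫ ω, B'.indicator (fun _ => (1:ℝ)) (X ω) * (A ω * (tη (V ω) * τ (X ω))) ∂μ := by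
      refine integral_congr_ae ?_
      filter_upwards [htηA] with ω h
      rw [← hXξ ω]
      rcases hA01 ω with h0 | h0
      · simp [h0, hχ_def, Set.indicator_apply]
      · rw [h h0, h0, hχ1]; ring
    have := step0 B' hB'
    rw [hL₁, hL₂, hKM₁, hKM₂, hR₁, hR₂] at this
    exact this
  -- Step 2: conditional expectation of the weighted difference given σ(X) vanishes
  set D : Ω → ℝ := fun ω => A ω * (tη (V ω) * (Eb ((V ω, A ω), Z ω) - τ (X ω))) with hD_def
  have hDω : ∀ ω, D ω = A ω * (tη (V ω) * (Eb ((V ω, A ω), Z ω) - τ (X ω))) := fun _ => rfl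
  have hDm : Measurable D :=
    hA.mul ((htηm.comp hV).mul ((hEb.comp (hG.prodMk hZ)).sub (hτ.comp hX)))
  have hdiff1 : ∀ ω, |Eb ((V ω, A ω), Z ω) - τ (X ω)| ≤ 1 := by
    intro ω
    have h1 := hτ01 (X ω)
    rcases hEb01 ((V ω, A ω), Z ω) with h | h <;> rw [h, abs_le] <;>
      constructor <;> linarith [h1.1, h1.2]
  have hDbd : ∀ᵐ ω ∂μ, |D ω| ≤ 1 := by
    filter_upwards [htηbd] with ω h
    rcases hA01 ω with h0 | h0
    · simp [hD_def, h0]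
    · rw [hDω ω, h0, one_mul, abs_mul]
      calc |tη (V ω)| * |Eb ((V ω, 1), Z ω) - τ (X ω)| ≤ 1 * 1 :=
        mul_le_mul (h h0) (by simpa [h0] using hdiff1 ω) (abs_nonneg _) zero_le_one
      _ = 1 := by norm_num
  have hDint : Integrable D μ := intBdd hDm.aestronglyMeasurable hDbd
  have hprod_bd : ∀ (e : Ω → ℝ), (∀ ω, |e ω| ≤ 1) → ∀ᵐ ω ∂μ, ∀ (B' : Set β),
      |B'.indicator (fun _ => (1:ℝ)) (X ω) * (A ω * (tη (V ω) * e ω))| ≤ 1 := by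
    intro e he
    filter_upwards [htηbd] with ω h B'
    rcases hA01 ω with h0 | h0
    · simp [h0]
    · rw [abs_mul, abs_mul, abs_mul, h0, abs_one, one_mul]
      have hi : |B'.indicator (fun _ => (1:ℝ)) (X ω)| ≤ 1 := by
        by_cases hω : X ω ∈ B' <;> simp [Set.indicator_apply, hω]
      calc |B'.indicator (fun _ => (1:ℝ)) (X ω)| * (|tη (V ω)| * |e ω|) ≤ 1 * (1 * 1) := by
            refine mul_le_mul hi (mul_le_mul (h h0) (he ω) (abs_nonneg _) zero_le_one)
              (by positivity) zero_le_one
      _ = 1 := by norm_num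
  have hDset : ∀ s, MeasurableSet[mcomap X] s → ∫ ω in s, D ω ∂μ = 0 := by
    rintro s ⟨B', hB', rfl⟩
    rw [← integral_indicator (hX hB')]
    have hint1 : Integrable (fun ω =>
        B'.indicator (fun _ => (1:ℝ)) (X ω) * (A ω * (tη (V ω) * Eb ((V ω, A ω), Z ω)))) μ :=
      intBdd (((measurable_const.indicator hB').comp hX).mul
        (hA.mul ((htηm.comp hV).mul (hEb.comp (hG.prodMk hZ))))).aestronglyMeasurable
        ((hprod_bd _ (fun ω => hEb1 _)).mono fun ω h => h B')
    have hint2 : Integrable (fun ω =>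
        B'.indicator (fun _ => (1:ℝ)) (X ω) * (A ω * (tη (V ω) * τ (X ω)))) μ :=
      intBdd (((measurable_const.indicator hB').comp hX).mul
        (hA.mul ((htηm.comp hV).mul (hτ.comp hX)))).aestronglyMeasurable
        ((hprod_bd _ (fun ω => hτ1 (X ω))).mono fun ω h => h B')
    have hsplit : ∫ ω, (X ⁻¹' B').indicator D ω ∂μ
        = (∫ ω, B'.indicator (fun _ => (1:ℝ)) (X ω)
              * (A ω * (tη (V ω) * Eb ((V ω, A ω), Z ω))) ∂μ)
          - ∫ ω, B'.indicator (fun _ => (1:ℝ)) (X ω) * (A ω * (tη (V ω) * τ (X ω))) ∂μ := by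
      rw [← integral_sub hint1 hint2]
      refine integral_congr_ae (Eventually.of_forall fun ω => ?_)
      rw [hind_comp B' D ω, hDω ω]
      ring
    rw [hsplit, step1 B' hB', sub_self]
  have hDcond : μ[D|mcomap X] =ᵐ[μ] fun _ => (0:ℝ) := by
    refine ((ae_eq_condExp_of_forall_setIntegral_eq hmX hDint
      (fun s _ _ => (integrable_const (0:ℝ)).integrableOn)
      (fun s hs _ => by rw [hDset s hs]; simp)
      (stronglyMeasurable_const.aestronglyMeasurable)).symm : _)
  -- Step 3: unweighted identity
  have step3 : ∀ B' : Set β, MeasurableSet B' →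
      ∫ ω, B'.indicator (fun _ => (1:ℝ)) (X ω) * (A ω * Eb ((V ω, A ω), Z ω)) ∂μ
        = ∫ ω, B'.indicator (fun _ => (1:ℝ)) (X ω) * (A ω * τ (X ω)) ∂μ := by
    intro B' hB'
    have hφm : Measurable fun b => B'.indicator (fun _ => (1:ℝ)) b * (tη (ρ b))⁻¹ :=
      (measurable_const.indicator hB').mul ((htηm.comp hρ).inv)
    set ψ : Ω → ℝ := fun ω => B'.indicator (fun _ => (1:ℝ)) (X ω) * (tη (ρ (X ω)))⁻¹ with hψ_def
    have hψm : Measurable ψ := hφm.comp hX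
    have hψmX : Measurable[mcomap X] ψ := hφm.comp (measurable_iff_comap_le.mpr le_rfl)
    have hψbd : ∀ ω, |ψ ω| ≤ ε₀⁻¹ := by
      intro ω
      have h1 : |(tη (ρ (X ω)))⁻¹| ≤ ε₀⁻¹ := by
        rw [abs_of_nonneg (inv_nonneg.mpr (le_trans hε₀.le (htηpos _)))]
        exact inv_anti₀ hε₀ (htηpos _)
      have h0 : (0:ℝ) ≤ ε₀⁻¹ := inv_nonneg.mpr hε₀.le
      by_cases hω : X ω ∈ B'
      · simpa [hψ_def, Set.indicator_apply, hω] using h1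
      · simpa [hψ_def, Set.indicator_apply, hω] using h0
    have hψD_int : Integrable (fun ω => ψ ω * D ω) μ :=
      hDint.bdd_mul hψm.aestronglyMeasurable
        (Eventually.of_forall fun ω => by rw [Real.norm_eq_abs]; exact hψbd ω)
    have hint0 : ∫ ω, ψ ω * D ω ∂μ = 0 := by
      have h1 := condExp_mul_of_stronglyMeasurable_left hψmX.stronglyMeasurable hψD_int hDint
      calc ∫ ω, ψ ω * D ω ∂μ = ∫ ω, (μ[fun ω => ψ ω * D ω|mcomap X]) ω ∂μ :=
            (integral_condExp hmX).symm
        _ = ∫ ω, ψ ω * (μ[D|mcomap X]) ω ∂μ := integral_congr_ae h1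
        _ = ∫ ω, (0:ℝ) ∂μ := integral_congr_ae (hDcond.mono fun ω h => by
              simp only []; rw [h]; ring)
        _ = 0 := integral_zero _ _
    have hint1 : Integrable (fun ω =>
        B'.indicator (fun _ => (1:ℝ)) (X ω) * (A ω * Eb ((V ω, A ω), Z ω))) μ := by
      refine intBdd (c := 1) (((measurable_const.indicator hB').comp hX).mul
        (hA.mul (hEb.comp (hG.prodMk hZ)))).aestronglyMeasurable
        (Eventually.of_forall fun ω => ?_)
      by_cases hω : X ω ∈ B' <;>
        rcases hA01 ω with h0 | h0 <;>
          simp [Set.indicator_apply, hω, h0, abs_le, hEb1 _, abs_le.mp (hEb1 ((V ω, 1), Z ω))]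
    have hint2 : Integrable (fun ω =>
        B'.indicator (fun _ => (1:ℝ)) (X ω) * (A ω * τ (X ω))) μ := by
      refine intBdd (c := 1) (((measurable_const.indicator hB').comp hX).mul
        (hA.mul (hτ.comp hX))).aestronglyMeasurable (Eventually.of_forall fun ω => ?_)
      by_cases hω : X ω ∈ B' <;>
        rcases hA01 ω with h0 | h0 <;>
          simp [Set.indicator_apply, hω, h0, abs_le, abs_le.mp (hτ1 (X ω))]
    have hsplit : ∫ ω, ψ ω * D ω ∂μ
        = (∫ ω, B'.indicator (fun _ => (1:ℝ)) (X ω) * (A ω * Eb ((V ω, A ω), Z ω)) ∂μ)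
          - ∫ ω, B'.indicator (fun _ => (1:ℝ)) (X ω) * (A ω * τ (X ω)) ∂μ := by
      rw [← integral_sub hint1 hint2]
      refine integral_congr_ae (Eventually.of_forall fun ω => ?_)
      simp only []
      rw [hψ_def, hDω ω]
      have hc : (tη (ρ (X ω)))⁻¹ * tη (ρ (X ω)) = 1 := inv_mul_cancel₀ (htηne _)
      calc B'.indicator (fun _ => (1:ℝ)) (X ω) * (tη (ρ (X ω)))⁻¹
            * (A ω * (tη (V ω) * (Eb ((V ω, A ω), Z ω) - τ (X ω))))
          = ((tη (ρ (X ω)))⁻¹ * tη (ρ (X ω))) * (B'.indicator (fun _ => (1:ℝ)) (X ω)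
              * (A ω * (Eb ((V ω, A ω), Z ω) - τ (X ω)))) := by rw [← hVρ ω]; ring
        _ = B'.indicator (fun _ => (1:ℝ)) (X ω) * (A ω * Eb ((V ω, A ω), Z ω))
            - B'.indicator (fun _ => (1:ℝ)) (X ω) * (A ω * τ (X ω)) := by rw [hc]; ring
    rw [hint0] at hsplit
    linarith [hsplit]
  -- Final: characterize the conditional expectation
  set W : Ω → ℝ := fun ω => A ω * R ω * Eb ((V ω, A ω), Z ω) / η (V ω) 1 with hW_def
  have hWω : ∀ ω, W ω = A ω * R ω * Eb ((V ω, A ω), Z ω) / η (V ω) 1 := fun _ => rfl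
  have hWm : Measurable W := ((hA.mul hR).mul (hEb.comp (hG.prodMk hZ))).div (hη1m.comp hV)
  have hWbd : ∀ᵐ ω ∂μ, |W ω| ≤ ε₀⁻¹ := by
    filter_upwards [hηpos] with ω h
    rw [hWω ω, abs_div, div_eq_mul_inv]
    have h2 : |A ω * R ω * Eb ((V ω, A ω), Z ω)| ≤ 1 := by
      rw [abs_mul, abs_mul]
      calc |A ω| * |R ω| * |Eb ((V ω, A ω), Z ω)| ≤ 1 * 1 * 1 := by
            refine mul_le_mul (mul_le_mul (hA1 ω) (hR1 ω) (abs_nonneg _) zero_le_one)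
              (hEb1 _) (abs_nonneg _) (by norm_num)
        _ = 1 := by norm_num
    have h3 : |η (V ω) 1|⁻¹ ≤ ε₀⁻¹ := by
      rw [abs_of_nonneg (le_trans hε₀.le h.2)]
      exact inv_anti₀ hε₀ h.2
    calc |A ω * R ω * Eb ((V ω, A ω), Z ω)| * |η (V ω) 1|⁻¹ ≤ 1 * ε₀⁻¹ :=
          mul_le_mul h2 h3 (by positivity) zero_le_one
      _ = ε₀⁻¹ := one_mul _
  have hWint : Integrable W μ := intBdd hWm.aestronglyMeasurable hWbd
  have hgbd : ∀ ω, |A ω * τ (X ω)| ≤ 1 := by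
    intro ω
    rw [abs_mul]
    calc |A ω| * |τ (X ω)| ≤ 1 * 1 :=
          mul_le_mul (hA1 ω) (hτ1 _) (abs_nonneg _) zero_le_one
      _ = 1 := by norm_num
  have hgint : Integrable (fun ω => A ω * τ (X ω)) μ :=
    intBdd (hA.mul (hτ.comp hX)).aestronglyMeasurable (Eventually.of_forall hgbd)
  have hind_comp2 : ∀ (B : Set (β × ℝ)) (f : Ω → ℝ) ω,
      ((fun ω => (X ω, A ω)) ⁻¹' B).indicator f ω
        = B.indicator (fun _ => (1:ℝ)) (X ω, A ω) * f ω := by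
    intro B f ω
    by_cases hω : (X ω, A ω) ∈ B <;> simp [Set.indicator_apply, hω]
  refine (ae_eq_condExp_of_forall_setIntegral_eq hm hWint
    (fun s _ _ => hgint.integrableOn) ?_ ?_).symm
  · rintro s ⟨B, hB, rfl⟩ _
    have hpre : MeasurableSet ((fun ω => (X ω, A ω)) ⁻¹' B) := (hX.prodMk hA) hB
    set B₁ : Set β := (fun b => (b, (1:ℝ))) ⁻¹' B with hB₁_def
    have hB₁m : MeasurableSet B₁ := (measurable_id.prodMk measurable_const) hB
    -- the g side
    have hg1 : ∫ ω in (fun ω => (X ω, A ω)) ⁻¹' B, A ω * τ (X ω) ∂μ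
        = ∫ ω, B₁.indicator (fun _ => (1:ℝ)) (X ω) * (A ω * τ (X ω)) ∂μ := by
      rw [← integral_indicator hpre]
      refine integral_congr_ae (Eventually.of_forall fun ω => ?_)
      rw [hind_comp2 B _ ω]
      simp only []
      rcases hA01 ω with h0 | h0
      · rw [h0]; ring
      · have hmem : ((X ω, A ω) ∈ B) ↔ (X ω ∈ B₁) := by rw [h0]; exact Iff.rfl
        by_cases hω : X ω ∈ B₁
        · simp [Set.indicator_apply, hω, hmem.mpr hω]
        · have hω2 : (X ω, A ω) ∉ B := fun hh => hω (hmem.mp hh)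
          simp [Set.indicator_apply, hω, hω2]
    -- the W side
    have hx12 : Measurable fun x : (γ1 × ℝ) × γZ => x.1.2 := measurable_fst.snd
    have hFWm : Measurable fun x : (γ1 × ℝ) × γZ =>
        B.indicator (fun _ => (1:ℝ)) (ξ x, x.1.2) * (χ x.1.2 * (Eb x * (tη x.1.1)⁻¹)) :=
      ((measurable_const.indicator hB).comp (hξ.prodMk hx12)).mul
        ((hχm.comp hx12).mul (hEb.mul ((htηm.comp measurable_fst.fst).inv)))
    have hW1 : ∫ ω in (fun ω => (X ω, A ω)) ⁻¹' B, W ω ∂μ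
        = ∫ ω, R ω * (B.indicator (fun _ => (1:ℝ)) (ξ ((V ω, A ω), Z ω), A ω)
            * (χ (A ω) * (Eb ((V ω, A ω), Z ω) * (tη (V ω))⁻¹))) ∂μ := by
      rw [← integral_indicator hpre]
      refine integral_congr_ae ?_
      filter_upwards [htηae] with ω h
      rw [hind_comp2 B W ω, hWω ω, ← hXξ ω, ← hAχ ω, div_eq_mul_inv, ← h]
      ring
    have hKW := KM _ hFWm
    have hW2 : ∫ ω, η (V ω) (A ω) * (B.indicator (fun _ => (1:ℝ)) (ξ ((V ω, A ω), Z ω), A ω)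
            * (χ (A ω) * (Eb ((V ω, A ω), Z ω) * (tη (V ω))⁻¹))) ∂μ
        = ∫ ω, B₁.indicator (fun _ => (1:ℝ)) (X ω) * (A ω * Eb ((V ω, A ω), Z ω)) ∂μ := by
      refine integral_congr_ae ?_
      filter_upwards [htηA] with ω h
      rw [← hXξ ω]
      rcases hA01 ω with h0 | h0
      · simp [h0, hχ_def, Set.indicator_apply]
      · rw [h h0, h0, hχ1]
        have hmem : ((X ω, (1:ℝ)) ∈ B) ↔ (X ω ∈ B₁) := Iff.rfl
        have hc : (tη (V ω))⁻¹ * tη (V ω) = 1 := inv_mul_cancel₀ (htηne _)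
        by_cases hω : X ω ∈ B₁
        · rw [Set.indicator_of_mem (hmem.mpr hω) fun _ => (1:ℝ),
            Set.indicator_of_mem hω fun _ => (1:ℝ)]
          calc tη (V ω) * (1 * (1 * (Eb ((V ω, 1), Z ω) * (tη (V ω))⁻¹)))
              = ((tη (V ω))⁻¹ * tη (V ω)) * Eb ((V ω, 1), Z ω) := by ring
            _ = 1 * (1 * Eb ((V ω, 1), Z ω)) := by rw [hc]; ring
        · rw [Set.indicator_of_notMem (fun hh => hω (hmem.mp hh)) fun _ => (1:ℝ),
            Set.indicator_of_notMem hω fun _ => (1:ℝ)]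
          ring
    rw [hg1, hW1, hKW, hW2, step3 B₁ hB₁m]
  · have hgm : Measurable[mcomap (fun ω => (X ω, A ω))] fun ω => A ω * τ (X ω) :=
      ((measurable_snd.mul (hτ.comp measurable_fst)) :
        Measurable fun p : β × ℝ => p.2 * τ p.1).comp (measurable_iff_comap_le.mpr le_rfl)
    exact hgm.stronglyMeasurable.aestronglyMeasurable


omit [StandardBorelSpace Ω] [Nonempty Ω] in
lemma comap_le_comap {α β' : Type*} [MeasurableSpace α] [MeasurableSpace β']
    {f : Ω → α} {g : Ω → β'} (φ : β' → α) (hφ : Measurable φ) (h : ∀ ω, f ω = φ (g ω)) :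
    MeasurableSpace.comap f inferInstance ≤ MeasurableSpace.comap g inferInstance := by
  rintro s ⟨t, ht, rfl⟩
  refine ⟨φ ⁻¹' t, hφ ht, ?_⟩
  ext ω
  simp [h ω]

end MarK


/-- **Projection identity for the efficient influence function of α.**
The conditional expectations of `A·R·E/η₁(L*)` given σ(L*,A,Y) and σ(L*,A) are
`A·ε₁(L*,Y)` and `A·ω₁(L*)`, and consequently the projection of `A·R·E/η₁(L*)` onto
`{f ∈ L² : f is σ(L*,A,Y)-measurable and E[f | σ(L*,A)] = 0}` equals `A·(ε₁ − ω₁)`. -/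
theorem stmt_12
    {Ω : Type*} [𝓕 : MeasurableSpace Ω] [StandardBorelSpace Ω] [Nonempty Ω]
    (μ : Measure Ω) [IsProbabilityMeasure μ]
    {p q : ℕ}
    (Lstar : Ω → Fin p → ℝ) (L : Ω → Fin q → ℝ) (A R Y : Ω → ℝ)
    (hLstar : Measurable Lstar) (hL : Measurable L)
    (hA : Measurable A) (hR : Measurable R) (hY : Measurable Y)
    (hA01 : ∀ ω, A ω = 0 ∨ A ω = 1) (hR01 : ∀ ω, R ω = 0 ∨ R ω = 1)
    (hY2 : MemLp Y 2 μ)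
    (g : (Fin q → ℝ) → ℝ → ℝ) (hg : Measurable (Function.uncurry g))
    (hg01 : ∀ x a, g x a = 0 ∨ g x a = 1)
    -- Assumption A4 (MAR): R ⫫ (L, Y) | σ(L*, A)
    (hMAR : CondIndepFun (MeasurableSpace.comap (fun ω => (Lstar ω, A ω)) inferInstance)
      ((hLstar.prodMk hA).comap_le) R (fun ω => (L ω, Y ω)) μ)
    -- Assumption A5 (missingness positivity)
    (η : (Fin p → ℝ) → ℝ → ℝ) (hη : Measurable (Function.uncurry η))
    (hηver : (fun ω => η (Lstar ω) (A ω)) =ᵐ[μ]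
      μ[R|MeasurableSpace.comap (fun ω => (Lstar ω, A ω)) inferInstance])
    (ε₀ : ℝ) (hε₀ : 0 < ε₀)
    (hηpos : ∀ᵐ ω ∂μ, ε₀ ≤ η (Lstar ω) 0 ∧ ε₀ ≤ η (Lstar ω) 1)
    (hA1R : 0 < μ {ω | A ω = 1 ∧ R ω = 1})
    (ε₁f : (Fin p → ℝ) → ℝ → ℝ) (hε₁f : Measurable (Function.uncurry ε₁f))
    (hε₁01 : ∀ x y, ε₁f x y ∈ Set.Icc (0:ℝ) 1)
    (hε₁ver : (fun ω => ε₁f (Lstar ω) (Y ω)) =ᵐ[μ[|{ω | A ω = 1 ∧ R ω = 1}]]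
      (μ[|{ω | A ω = 1 ∧ R ω = 1}])[(fun ω => g (L ω) (A ω))|MeasurableSpace.comap
          (fun ω => (Lstar ω, Y ω)) inferInstance])
    (ω₁ : (Fin p → ℝ) → ℝ) (hω₁ : Measurable ω₁)
    (hω₁01 : ∀ x, ω₁ x ∈ Set.Icc (0:ℝ) 1)
    (hω₁ver : (fun ω => ω₁ (Lstar ω)) =ᵐ[μ[|{ω | A ω = 1 ∧ R ω = 1}]]
      (μ[|{ω | A ω = 1 ∧ R ω = 1}])[(fun ω => g (L ω) (A ω))|MeasurableSpace.comap
          Lstar inferInstance]) :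
    (μ[(fun ω => A ω * R ω * g (L ω) (A ω) / η (Lstar ω) 1)|
        MeasurableSpace.comap (fun ω => (Lstar ω, A ω, Y ω)) inferInstance]
      =ᵐ[μ] fun ω => A ω * ε₁f (Lstar ω) (Y ω)) ∧
    (μ[(fun ω => A ω * R ω * g (L ω) (A ω) / η (Lstar ω) 1)|
        MeasurableSpace.comap (fun ω => (Lstar ω, A ω)) inferInstance]
      =ᵐ[μ] fun ω => A ω * ω₁ (Lstar ω)) ∧
    -- the candidate projection lies in the tangent-space component Λ_{Y|L*,A} ...
    (MemLp (fun ω => A ω * (ε₁f (Lstar ω) (Y ω) - ω₁ (Lstar ω))) 2 μ) ∧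
    (Measurable[MeasurableSpace.comap (fun ω => (Lstar ω, A ω, Y ω)) inferInstance]
      (fun ω => A ω * (ε₁f (Lstar ω) (Y ω) - ω₁ (Lstar ω)))) ∧
    (μ[(fun ω => A ω * (ε₁f (Lstar ω) (Y ω) - ω₁ (Lstar ω)))|
        MeasurableSpace.comap (fun ω => (Lstar ω, A ω)) inferInstance] =ᵐ[μ] fun _ => 0) ∧
    -- ... and the residual is orthogonal to every element of that component
    (∀ f : Ω → ℝ, MemLp f 2 μ →
      Measurable[MeasurableSpace.comap (fun ω => (Lstar ω, A ω, Y ω)) inferInstance] f →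
      (μ[f|MeasurableSpace.comap (fun ω => (Lstar ω, A ω)) inferInstance] =ᵐ[μ] fun _ => 0) →
      ∫ ω, (A ω * R ω * g (L ω) (A ω) / η (Lstar ω) 1
          - A ω * (ε₁f (Lstar ω) (Y ω) - ω₁ (Lstar ω))) * f ω ∂μ = 0) := by
  
  have hZm : Measurable fun ω => (L ω, Y ω) := hL.prodMk hY
  set S : Set Ω := {ω | A ω = 1 ∧ R ω = 1} with hSdef
  -- Eb
  set Eb : ((Fin p → ℝ) × ℝ) × ((Fin q → ℝ) × ℝ) → ℝ := fun x => g x.2.1 x.1.2 with hEb_def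
  have hEbm : Measurable Eb := hg.comp ((measurable_snd.fst).prodMk (measurable_fst.snd))
  have hEb01 : ∀ x, Eb x = 0 ∨ Eb x = 1 := fun x => hg01 x.2.1 x.1.2
  -- claim 2
  have claim2 : μ[(fun ω => A ω * R ω * g (L ω) (A ω) / η (Lstar ω) 1)|
      MeasurableSpace.comap (fun ω => (Lstar ω, A ω)) inferInstance]
        =ᵐ[μ] fun ω => A ω * ω₁ (Lstar ω) := by
    exact genClaim μ hLstar hA hZm hR hA01 hR01 ((hLstar.prodMk hA).comap_le) hMAR hη hηver
      hε₀ hηpos hEbm hEb01 rfl hA1R hLstar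
      (ξ := fun x => x.1.1) (measurable_fst.fst) (fun ω => rfl)
      (ρ := id) measurable_id (fun ω => rfl) hω₁ hω₁01 hω₁ver
  -- claim 1
  have hmeq : MeasurableSpace.comap (fun ω => ((Lstar ω, Y ω), A ω)) inferInstance
      = MeasurableSpace.comap (fun ω => (Lstar ω, A ω, Y ω)) inferInstance := by
    refine le_antisymm ?_ ?_
    · exact comap_le_comap (fun x => ((x.1, x.2.2), x.2.1))
        (((measurable_fst.prodMk measurable_snd.snd)).prodMk measurable_snd.fst)
        (fun ω => rfl)
    · exact comap_le_comap (fun x => (x.1.1, x.2, x.1.2))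
        ((measurable_fst.fst).prodMk (measurable_snd.prodMk measurable_fst.snd))
        (fun ω => rfl)
  have claim1 : μ[(fun ω => A ω * R ω * g (L ω) (A ω) / η (Lstar ω) 1)|
      MeasurableSpace.comap (fun ω => (Lstar ω, A ω, Y ω)) inferInstance]
        =ᵐ[μ] fun ω => A ω * ε₁f (Lstar ω) (Y ω) := by
    rw [← hmeq]
    exact genClaim μ hLstar hA hZm hR hA01 hR01 ((hLstar.prodMk hA).comap_le) hMAR hη hηver
      hε₀ hηpos hEbm hEb01 rfl hA1R (hLstar.prodMk hY)
      (ξ := fun x => (x.1.1, x.2.2)) ((measurable_fst.fst).prodMk measurable_snd.snd)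
      (fun ω => rfl)
      (ρ := Prod.fst) measurable_fst (fun ω => rfl) hε₁f
      (fun b => hε₁01 b.1 b.2) hε₁ver
  -- boundedness facts
  have hA1 : ∀ ω, |A ω| ≤ 1 := fun ω => by rcases hA01 ω with h | h <;> simp [h]
  have hcand_bd : ∀ ω, |A ω * (ε₁f (Lstar ω) (Y ω) - ω₁ (Lstar ω))| ≤ 1 := by
    intro ω
    have h1 := hε₁01 (Lstar ω) (Y ω)
    have h2 := hω₁01 (Lstar ω)
    rw [abs_mul]
    calc |A ω| * |ε₁f (Lstar ω) (Y ω) - ω₁ (Lstar ω)| ≤ 1 * 1 := by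
          refine mul_le_mul (hA1 ω) ?_ (abs_nonneg _) zero_le_one
          rw [abs_le]
          constructor <;> [linarith [h1.1, h2.2]; linarith [h1.2, h2.1]]
      _ = 1 := by norm_num
  have hcand_m : Measurable fun ω => A ω * (ε₁f (Lstar ω) (Y ω) - ω₁ (Lstar ω)) :=
    hA.mul (((hε₁f.comp (hLstar.prodMk hY)) : Measurable fun ω => ε₁f (Lstar ω) (Y ω)).sub
      (hω₁.comp hLstar))
  have part3 : MemLp (fun ω => A ω * (ε₁f (Lstar ω) (Y ω) - ω₁ (Lstar ω))) 2 μ :=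
    MemLp.of_bound hcand_m.aestronglyMeasurable 1
      (Eventually.of_forall fun ω => by rw [Real.norm_eq_abs]; exact hcand_bd ω)
  have part4 : Measurable[MeasurableSpace.comap (fun ω => (Lstar ω, A ω, Y ω)) inferInstance]
      (fun ω => A ω * (ε₁f (Lstar ω) (Y ω) - ω₁ (Lstar ω))) := by
    have hφ : Measurable fun x : (Fin p → ℝ) × ℝ × ℝ => x.2.1 * (ε₁f x.1 x.2.2 - ω₁ x.1) :=
      (measurable_snd.fst).mul ((hε₁f.comp (measurable_fst.prodMk measurable_snd.snd)).sub
        (hω₁.comp measurable_fst))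
    exact hφ.comp (measurable_iff_comap_le.mpr le_rfl)
  -- integrability
  have hAε_bd : ∀ ω, |A ω * ε₁f (Lstar ω) (Y ω)| ≤ 1 := by
    intro ω
    have h1 := hε₁01 (Lstar ω) (Y ω)
    rw [abs_mul]
    calc |A ω| * |ε₁f (Lstar ω) (Y ω)| ≤ 1 * 1 := by
          refine mul_le_mul (hA1 ω) ?_ (abs_nonneg _) zero_le_one
          rw [abs_le]; constructor <;> linarith [h1.1, h1.2]
      _ = 1 := by norm_num
  have hAω_bd : ∀ ω, |A ω * ω₁ (Lstar ω)| ≤ 1 := by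
    intro ω
    have h2 := hω₁01 (Lstar ω)
    rw [abs_mul]
    calc |A ω| * |ω₁ (Lstar ω)| ≤ 1 * 1 := by
          refine mul_le_mul (hA1 ω) ?_ (abs_nonneg _) zero_le_one
          rw [abs_le]; constructor <;> linarith [h2.1, h2.2]
      _ = 1 := by norm_num
  have hAε_int : Integrable (fun ω => A ω * ε₁f (Lstar ω) (Y ω)) μ :=
    intBdd (hA.mul (hε₁f.comp (hLstar.prodMk hY))).aestronglyMeasurable
      (Eventually.of_forall hAε_bd)
  have hAω_int : Integrable (fun ω => A ω * ω₁ (Lstar ω)) μ :=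
    intBdd (hA.mul (hω₁.comp hLstar)).aestronglyMeasurable (Eventually.of_forall hAω_bd)
  have hcand_int : Integrable (fun ω => A ω * (ε₁f (Lstar ω) (Y ω) - ω₁ (Lstar ω))) μ :=
    intBdd hcand_m.aestronglyMeasurable (Eventually.of_forall hcand_bd)
  -- W facts
  set W : Ω → ℝ := fun ω => A ω * R ω * g (L ω) (A ω) / η (Lstar ω) 1 with hW_def
  have hWω : ∀ ω, W ω = A ω * R ω * g (L ω) (A ω) / η (Lstar ω) 1 := fun _ => rfl
  have hR1 : ∀ ω, |R ω| ≤ 1 := fun ω => by rcases hR01 ω with h | h <;> simp [h]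
  have hgE1 : ∀ ω, |g (L ω) (A ω)| ≤ 1 := fun ω => by
    rcases hg01 (L ω) (A ω) with h | h <;> simp [h]
  have hWm : Measurable W :=
    ((hA.mul hR).mul (hg.comp (hL.prodMk hA))).div
      ((hη.comp (measurable_id.prodMk measurable_const)).comp hLstar)
  have hWbd : ∀ᵐ ω ∂μ, |W ω| ≤ ε₀⁻¹ := by
    filter_upwards [hηpos] with ω h
    rw [hWω ω, abs_div, div_eq_mul_inv]
    have h2 : |A ω * R ω * g (L ω) (A ω)| ≤ 1 := by
      rw [abs_mul, abs_mul]
      calc |A ω| * |R ω| * |g (L ω) (A ω)| ≤ 1 * 1 * 1 := by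
            refine mul_le_mul (mul_le_mul (hA1 ω) (hR1 ω) (abs_nonneg _) zero_le_one)
              (hgE1 ω) (abs_nonneg _) (by norm_num)
        _ = 1 := by norm_num
    have h3 : |η (Lstar ω) 1|⁻¹ ≤ ε₀⁻¹ := by
      rw [abs_of_nonneg (le_trans hε₀.le h.2)]
      exact inv_anti₀ hε₀ h.2
    calc |A ω * R ω * g (L ω) (A ω)| * |η (Lstar ω) 1|⁻¹ ≤ 1 * ε₀⁻¹ :=
          mul_le_mul h2 h3 (by positivity) zero_le_one
      _ = ε₀⁻¹ := one_mul _
  have hWint : Integrable W μ := intBdd hWm.aestronglyMeasurable hWbd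
  -- σ-algebra inclusions
  have hm₀ : MeasurableSpace.comap (fun ω => (Lstar ω, A ω)) inferInstance ≤ 𝓕 :=
    (hLstar.prodMk hA).comap_le
  have hm₂ : MeasurableSpace.comap (fun ω => (Lstar ω, A ω, Y ω)) inferInstance ≤ 𝓕 :=
    (hLstar.prodMk (hA.prodMk hY)).comap_le
  have hm₀₂ : MeasurableSpace.comap (fun ω => (Lstar ω, A ω)) inferInstance
      ≤ MeasurableSpace.comap (fun ω => (Lstar ω, A ω, Y ω)) inferInstance :=
    comap_le_comap (fun x => (x.1, x.2.1))
      (measurable_fst.prodMk measurable_snd.fst) (fun ω => rfl)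
  -- part 5
  have hAωsm : StronglyMeasurable[MeasurableSpace.comap (fun ω => (Lstar ω, A ω)) inferInstance]
      (fun ω => A ω * ω₁ (Lstar ω)) := by
    have hφ : Measurable fun x : (Fin p → ℝ) × ℝ => x.2 * ω₁ x.1 :=
      measurable_snd.mul (hω₁.comp measurable_fst)
    exact (hφ.comp (measurable_iff_comap_le.mpr le_rfl)).stronglyMeasurable
  have e4 : μ[(fun ω => A ω * ω₁ (Lstar ω))|
      MeasurableSpace.comap (fun ω => (Lstar ω, A ω)) inferInstance]
        = fun ω => A ω * ω₁ (Lstar ω) :=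
    condExp_of_stronglyMeasurable hm₀ hAωsm hAω_int
  have e3 : μ[(fun ω => A ω * ε₁f (Lstar ω) (Y ω))|
      MeasurableSpace.comap (fun ω => (Lstar ω, A ω)) inferInstance]
        =ᵐ[μ] fun ω => A ω * ω₁ (Lstar ω) := by
    calc μ[(fun ω => A ω * ε₁f (Lstar ω) (Y ω))|
          MeasurableSpace.comap (fun ω => (Lstar ω, A ω)) inferInstance]
        =ᵐ[μ] μ[μ[W|MeasurableSpace.comap (fun ω => (Lstar ω, A ω, Y ω)) inferInstance]|
          MeasurableSpace.comap (fun ω => (Lstar ω, A ω)) inferInstance] :=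
          condExp_congr_ae claim1.symm
      _ =ᵐ[μ] μ[W|MeasurableSpace.comap (fun ω => (Lstar ω, A ω)) inferInstance] :=
          condExp_condExp_of_le hm₀₂ hm₂
      _ =ᵐ[μ] fun ω => A ω * ω₁ (Lstar ω) := claim2
  have part5 : μ[(fun ω => A ω * (ε₁f (Lstar ω) (Y ω) - ω₁ (Lstar ω)))|
      MeasurableSpace.comap (fun ω => (Lstar ω, A ω)) inferInstance]
        =ᵐ[μ] fun _ => (0:ℝ) := by
    have e1 : μ[(fun ω => A ω * (ε₁f (Lstar ω) (Y ω) - ω₁ (Lstar ω)))|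
        MeasurableSpace.comap (fun ω => (Lstar ω, A ω)) inferInstance]
          =ᵐ[μ] μ[(fun ω => A ω * ε₁f (Lstar ω) (Y ω)) - (fun ω => A ω * ω₁ (Lstar ω))|
        MeasurableSpace.comap (fun ω => (Lstar ω, A ω)) inferInstance] :=
      condExp_congr_ae (Eventually.of_forall fun ω => by simp [Pi.sub_apply]; ring)
    have e2 := condExp_sub (μ := μ)
      (m := MeasurableSpace.comap (fun ω => (Lstar ω, A ω)) inferInstance) hAε_int hAω_int
    filter_upwards [e1, e2, e3] with ω h1 h2 h3
    rw [h1, h2, Pi.sub_apply, h3, congrFun e4 ω, sub_self]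
  refine ⟨claim1, claim2, part3, part4, part5, ?_⟩
  -- part 6: orthogonality
  intro f hf2 hfm hf0
  have hfint : Integrable f μ := hf2.integrable one_le_two
  have hfm' : StronglyMeasurable[MeasurableSpace.comap
      (fun ω => (Lstar ω, A ω, Y ω)) inferInstance] f := hfm.stronglyMeasurable
  have hWf_int : Integrable (fun ω => W ω * f ω) μ :=
    hfint.bdd_mul hWm.aestronglyMeasurable
      (hWbd.mono fun ω h => by rw [Real.norm_eq_abs]; exact h)
  have hfW_int : Integrable (fun ω => f ω * W ω) μ :=
    hWf_int.congr (Eventually.of_forall fun ω => mul_comm _ _)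
  have hcf_int : Integrable (fun ω => (A ω * (ε₁f (Lstar ω) (Y ω) - ω₁ (Lstar ω))) * f ω) μ :=
    hfint.bdd_mul hcand_m.aestronglyMeasurable
      (Eventually.of_forall fun ω => by rw [Real.norm_eq_abs]; exact hcand_bd ω)
  have hAεf_int : Integrable (fun ω => f ω * (A ω * ε₁f (Lstar ω) (Y ω))) μ :=
    (hfint.bdd_mul (hA.mul (hε₁f.comp (hLstar.prodMk hY))).aestronglyMeasurable
      (Eventually.of_forall fun ω => by rw [Real.norm_eq_abs]; exact hAε_bd ω)).congr
      (Eventually.of_forall fun ω => mul_comm _ _)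
  have hAωf_int : Integrable (fun ω => (A ω * ω₁ (Lstar ω)) * f ω) μ :=
    hfint.bdd_mul (hA.mul (hω₁.comp hLstar)).aestronglyMeasurable
      (Eventually.of_forall fun ω => by rw [Real.norm_eq_abs]; exact hAω_bd ω)
  have hpull1 : μ[(fun ω => f ω * W ω)|MeasurableSpace.comap
      (fun ω => (Lstar ω, A ω, Y ω)) inferInstance]
        =ᵐ[μ] fun ω => f ω * (μ[W|MeasurableSpace.comap
          (fun ω => (Lstar ω, A ω, Y ω)) inferInstance]) ω :=
    condExp_mul_of_stronglyMeasurable_left hfm' hfW_int hWint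
  have hWf_eq : ∫ ω, W ω * f ω ∂μ = ∫ ω, f ω * (A ω * ε₁f (Lstar ω) (Y ω)) ∂μ := by
    calc ∫ ω, W ω * f ω ∂μ = ∫ ω, f ω * W ω ∂μ :=
          integral_congr_ae (Eventually.of_forall fun ω => mul_comm _ _)
      _ = ∫ ω, (μ[(fun ω => f ω * W ω)|MeasurableSpace.comap
            (fun ω => (Lstar ω, A ω, Y ω)) inferInstance]) ω ∂μ :=
          (integral_condExp hm₂).symm
      _ = ∫ ω, f ω * (μ[W|MeasurableSpace.comap
            (fun ω => (Lstar ω, A ω, Y ω)) inferInstance]) ω ∂μ :=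
          integral_congr_ae hpull1
      _ = ∫ ω, f ω * (A ω * ε₁f (Lstar ω) (Y ω)) ∂μ := by
          refine integral_congr_ae ?_
          filter_upwards [claim1] with ω h
          rw [h]
  have hpull2 : μ[(fun ω => (A ω * ω₁ (Lstar ω)) * f ω)|MeasurableSpace.comap
      (fun ω => (Lstar ω, A ω)) inferInstance]
        =ᵐ[μ] fun ω => (A ω * ω₁ (Lstar ω)) * (μ[f|MeasurableSpace.comap
          (fun ω => (Lstar ω, A ω)) inferInstance]) ω :=
    condExp_mul_of_stronglyMeasurable_left hAωsm hAωf_int hfint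
  have hzero : ∫ ω, (A ω * ω₁ (Lstar ω)) * f ω ∂μ = 0 := by
    calc ∫ ω, (A ω * ω₁ (Lstar ω)) * f ω ∂μ
        = ∫ ω, (μ[(fun ω => (A ω * ω₁ (Lstar ω)) * f ω)|MeasurableSpace.comap
            (fun ω => (Lstar ω, A ω)) inferInstance]) ω ∂μ := (integral_condExp hm₀).symm
      _ = ∫ ω, (0:ℝ) ∂μ := by
          refine integral_congr_ae ?_
          filter_upwards [hpull2, hf0] with ω h1 h2
          rw [h1, h2]; ring
      _ = 0 := integral_zero _ _
  calc ∫ ω, (W ω - A ω * (ε₁f (Lstar ω) (Y ω) - ω₁ (Lstar ω))) * f ω ∂μ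
      = ∫ ω, (W ω * f ω
          - (A ω * (ε₁f (Lstar ω) (Y ω) - ω₁ (Lstar ω))) * f ω) ∂μ :=
        integral_congr_ae (Eventually.of_forall fun ω => by ring)
    _ = (∫ ω, W ω * f ω ∂μ)
          - ∫ ω, (A ω * (ε₁f (Lstar ω) (Y ω) - ω₁ (Lstar ω))) * f ω ∂μ :=
        integral_sub hWf_int hcf_int
    _ = (∫ ω, f ω * (A ω * ε₁f (Lstar ω) (Y ω)) ∂μ)
          - ∫ ω, (A ω * (ε₁f (Lstar ω) (Y ω) - ω₁ (Lstar ω))) * f ω ∂μ := by rw [hWf_eq]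
    _ = ∫ ω, (f ω * (A ω * ε₁f (Lstar ω) (Y ω))
          - (A ω * (ε₁f (Lstar ω) (Y ω) - ω₁ (Lstar ω))) * f ω) ∂μ :=
        (integral_sub hAεf_int hcf_int).symm
    _ = ∫ ω, (A ω * ω₁ (Lstar ω)) * f ω ∂μ :=
        integral_congr_ae (Eventually.of_forall fun ω => by ring)
    _ = 0 := hzero
end
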